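/- arXiv:2012.01090 — 2 statements merged into one kernel-verified Lean document; each statement's English description precedes it below -/
import Mathlib

section
/- Let m_1 ≥ m_2 ≥ 3 and n ≥ 5. (i) If m_1 + m_2 − 1 = n, then ε(C_{m_1,m_2}^n) ≤ ε(U_{n,n−1}^l), with equality if and only if m_1 is even and m_2 = 3. (ii) For every 3 ≤ g ≤ n−2, ε(U_{n,g}^p) ≤ ε(U_{n,g+1}^p), with equality if and only if g is even. -/
open SimpleGraph

/-- The eccentricity of a vertex: maximum distance to any vertex. -/
noncomputable def ecc {V : Type*} (G : SimpleGraph V) (v : V) : ℕ :=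
  ⨆ u, G.dist v u

/-- The total eccentricity index: sum of eccentricities of all vertices. -/
noncomputable def totalEcc {V : Type*} [Fintype V] (G : SimpleGraph V) : ℕ :=
  ∑ v, ecc G v

/-- A pendant vertex: a vertex of degree one, i.e. with exactly one neighbour. -/
def IsPendant {V : Type*} (G : SimpleGraph V) (v : V) : Prop :=
  ∃! u, G.Adj v u

/-- A cut vertex: a vertex whose removal disconnects the graph. -/
def IsCutVertex {V : Type*} (G : SimpleGraph V) (w : V) : Prop :=
  ¬ (G.induce {v | v ≠ w}).Connected

/-- distance between two subgraphs -/
noncomputable def subgraphDist {V : Type*} (G : SimpleGraph V) (B B' : G.Subgraph) : ℕ :=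
  sInf {d | ∃ u ∈ B.verts, ∃ w ∈ B'.verts, G.dist u w = d}

/-- A 2-connected subgraph: at least two vertices, connected, and no cut vertex. -/
def TwoConn {V : Type*} {G : SimpleGraph V} (H : G.Subgraph) : Prop :=
  2 ≤ H.verts.ncard ∧ H.coe.Connected ∧ ∀ w, ¬ IsCutVertex H.coe w

/-- A block: a maximal 2-connected subgraph. -/
def IsBlock {V : Type*} {G : SimpleGraph V} (H : G.Subgraph) : Prop :=
  TwoConn H ∧ ∀ H' : G.Subgraph, H ≤ H' → TwoConn H' → H' = H

/-- A pendant block: a block containing exactly one cut vertex of `G`. -/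
def IsPendantBlock {V : Type*} (G : SimpleGraph V) (H : G.Subgraph) : Prop :=
  ∃! w, w ∈ H.verts ∧ IsCutVertex G w

/-- `G_{k,l}`: the graph obtained from `G` by attaching two new paths,
with `k` resp. `l` new vertices, at the vertex `v`. -/
def attachTwoPaths {V : Type*} (G : SimpleGraph V) (v : V) (k l : ℕ) :
    SimpleGraph (V ⊕ (Fin k ⊕ Fin l)) :=
  SimpleGraph.fromRel (fun p q =>
    match p, q with
    | .inl x, .inl y => G.Adj x y
    | .inl x, .inr (.inl i) => x = v ∧ i.val = 0
    | .inl x, .inr (.inr i) => x = v ∧ i.val = 0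
    | .inr (.inl i), .inr (.inl j) => i.val + 1 = j.val
    | .inr (.inr i), .inr (.inr j) => i.val + 1 = j.val
    | _, _ => False)

/-- The graph obtained from `H1`, `H2` and the path `P_d = v_1 v_2 … v_d` by identifying
`u ∈ V(H1)`, `v ∈ V(H2)` and `v_1` into a single vertex.  The `Fin (d-1)` part records the
path vertices `v_2, …, v_d`. -/
def glueMid {V1 V2 : Type*} (H1 : SimpleGraph V1) (H2 : SimpleGraph V2)
    (u : V1) (v : V2) (d : ℕ) :
    SimpleGraph (V1 ⊕ ({x : V2 // x ≠ v} ⊕ Fin (d - 1))) :=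
  SimpleGraph.fromRel (fun p q =>
    match p, q with
    | .inl x, .inl y => H1.Adj x y
    | .inl x, .inr (.inl y) => x = u ∧ H2.Adj v y.1
    | .inl x, .inr (.inr i) => x = u ∧ i.val = 0
    | .inr (.inl x), .inr (.inl y) => H2.Adj x.1 y.1
    | .inr (.inr i), .inr (.inr j) => i.val + 1 = j.val
    | _, _ => False)

/-- The graph obtained from `H1`, `H2` and the path `P_d = v_1 v_2 … v_d` by identifying
`u ∈ V(H1)` with `v_1` and `v ∈ V(H2)` with `v_d`.  The `Fin (d-1)` part records the path
vertices `v_2, …, v_d` (the last one being identified with `v`). -/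
def glueEnds {V1 V2 : Type*} (H1 : SimpleGraph V1) (H2 : SimpleGraph V2)
    (u : V1) (v : V2) (d : ℕ) :
    SimpleGraph (V1 ⊕ ({x : V2 // x ≠ v} ⊕ Fin (d - 1))) :=
  SimpleGraph.fromRel (fun p q =>
    match p, q with
    | .inl x, .inl y => H1.Adj x y
    | .inl x, .inr (.inr i) => x = u ∧ i.val = 0
    | .inr (.inl x), .inr (.inl y) => H2.Adj x.1 y.1
    | .inr (.inr i), .inr (.inl y) => i.val + 1 = d - 1 ∧ H2.Adj v y.1
    | .inr (.inr i), .inr (.inr j) => i.val + 1 = j.val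
    | _, _ => False)

/-- `U_{n,g}^l`: the unicyclic graph on `n` vertices obtained by joining one end vertex of
the path `P_{n-g}` to a vertex of the cycle `C_g` by an edge. -/
def UnlGraph (n g : ℕ) : SimpleGraph (Fin (n - g) ⊕ Fin g) :=
  SimpleGraph.fromRel (fun p q =>
    match p, q with
    | .inl i, .inl j => i.val + 1 = j.val
    | .inl i, .inr j => i.val + 1 = n - g ∧ j.val = 0
    | .inr i, .inr j => i.val + 1 = j.val ∨ (i.val = 0 ∧ j.val + 1 = g)
    | _, _ => False)

/-- `U_{n,g}^p`: the unicyclic graph on `n` vertices obtained by attaching `n - g` pendant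
vertices to one vertex of the cycle `C_g`. -/
def UnpGraph (n g : ℕ) : SimpleGraph (Fin g ⊕ Fin (n - g)) :=
  SimpleGraph.fromRel (fun p q =>
    match p, q with
    | .inl i, .inl j => i.val + 1 = j.val ∨ (i.val = 0 ∧ j.val + 1 = g)
    | .inl i, .inr _ => i.val = 0
    | _, _ => False)

/-- The graph obtained by joining the vertex `u` of `H` to the pendant vertex of
`U_{r,g}^l` by an edge. -/
def joinPendant {V : Type*} (H : SimpleGraph V) (u : V) (r g : ℕ) :
    SimpleGraph (V ⊕ (Fin (r - g) ⊕ Fin g)) :=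
  SimpleGraph.fromRel (fun p q =>
    match p, q with
    | .inl x, .inl y => H.Adj x y
    | .inl x, .inr (.inl i) => x = u ∧ i.val = 0
    | .inr a, .inr b => (UnlGraph r g).Adj a b
    | _, _ => False)

/-- `C_{m1,m2}^n` in the case `n = m1 + m2 - 1`: two cycles `C_{m1}` and `C_{m2}`
sharing exactly one vertex (the vertex `0`). -/
def twoCyclesGlued (m1 m2 : ℕ) : SimpleGraph (Fin (m1 + m2 - 1)) :=
  SimpleGraph.fromRel (fun i j =>
    (i.val + 1 = j.val ∧ j.val < m1) ∨ (i.val = 0 ∧ j.val + 1 = m1)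
    ∨ (i.val = 0 ∧ j.val = m1) ∨ (m1 ≤ i.val ∧ i.val + 1 = j.val)
    ∨ (i.val = 0 ∧ j.val + 2 = m1 + m2))

/-- `C_{3,3}^n` for `n > 5`: two triangles `{0,1,2}` and `{n-3,n-2,n-1}` joined by the path
`2, 3, …, n-3` (a path on `n - 4` vertices whose ends are identified with a vertex of each
triangle). -/
def C33 (n : ℕ) : SimpleGraph (Fin n) :=
  SimpleGraph.fromRel (fun i j =>
    (i.val = 0 ∧ j.val = 1) ∨ (i.val = 0 ∧ j.val = 2) ∨ (i.val = 1 ∧ j.val = 2)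
    ∨ (2 ≤ i.val ∧ i.val + 1 = j.val ∧ j.val + 3 ≤ n)
    ∨ (i.val + 3 = n ∧ j.val + 2 = n) ∨ (i.val + 2 = n ∧ j.val + 1 = n)
    ∨ (i.val + 3 = n ∧ j.val + 1 = n))

/-- `T(l, m, d)`: the tree obtained from the path `P_d` by attaching `l` pendant vertices at
one end and `m` pendant vertices at the other end. -/
def Tlmd (l m d : ℕ) : SimpleGraph (Fin d ⊕ (Fin l ⊕ Fin m)) :=
  SimpleGraph.fromRel (fun p q =>
    match p, q with
    | .inl i, .inl j => i.val + 1 = j.val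
    | .inl i, .inr (.inl _) => i.val = 0
    | .inl i, .inr (.inr _) => i.val + 1 = d
    | _, _ => False)

/-- `K_m^n(l_1, …, l_m)`: the graph obtained from the complete graph `K_m` by identifying,
for each `i`, one end vertex of a path on `l i` vertices with the `i`-th vertex of `K_m`.
The vertex `⟨i, 0⟩` is the `i`-th vertex of the complete graph. -/
def Kmn (m : ℕ) (l : Fin m → ℕ) : SimpleGraph ((i : Fin m) × Fin (l i)) :=
  SimpleGraph.fromRel (fun p q =>
    (p.1 = q.1 ∧ p.2.val + 1 = q.2.val) ∨ (p.1 ≠ q.1 ∧ p.2.val = 0 ∧ q.2.val = 0))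

/-- The graph obtained from `H`, `C_{m1}` and `C_{m2}` by identifying the vertex `w` of `H`,
a vertex of `C_{m1}` and a vertex of `C_{m2}` into one vertex. -/
def glueTwoCycles {V : Type*} (H : SimpleGraph V) (w : V) (m1 m2 : ℕ) :
    SimpleGraph (V ⊕ (Fin (m1 - 1) ⊕ Fin (m2 - 1))) :=
  SimpleGraph.fromRel (fun p q =>
    match p, q with
    | .inl x, .inl y => H.Adj x y
    | .inl x, .inr (.inl i) => x = w ∧ (i.val = 0 ∨ i.val + 2 = m1)
    | .inl x, .inr (.inr i) => x = w ∧ (i.val = 0 ∨ i.val + 2 = m2)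
    | .inr (.inl i), .inr (.inl j) => i.val + 1 = j.val
    | .inr (.inr i), .inr (.inr j) => i.val + 1 = j.val
    | _, _ => False)

/-- The graph obtained from `H` and the cycle `C_M` by identifying the vertex `w` of `H`
with one vertex of the cycle. -/
def glueOneCycle {V : Type*} (H : SimpleGraph V) (w : V) (M : ℕ) :
    SimpleGraph (V ⊕ Fin (M - 1)) :=
  SimpleGraph.fromRel (fun p q =>
    match p, q with
    | .inl x, .inl y => H.Adj x y
    | .inl x, .inr i => x = w ∧ (i.val = 0 ∨ i.val + 2 = M)
    | .inr i, .inr j => i.val + 1 = j.val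
    | _, _ => False)



def cd (m p q : ℕ) : ℕ := min (max p q - min p q) (m - (max p q - min p q))

lemma walk_lower {V : Type*} {G : SimpleGraph V} (D : V → ℕ)
    (hlip : ∀ u w, G.Adj u w → D w ≤ D u + 1) :
    ∀ {x y : V} (p : G.Walk x y), D x ≤ D y + p.length := by
  intro x y p
  induction p with
  | nil => simp
  | cons h q ih =>
    have := hlip _ _ h.symm
    simp only [Walk.length_cons]
    omega

lemma dist_eq_of {V : Type*} (G : SimpleGraph V) (v : V) (D : V → ℕ)
    (hpos : ∀ u, D u = 0 ↔ u = v)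
    (hlip : ∀ u w, G.Adj u w → D w ≤ D u + 1)
    (hstep : ∀ u, D u ≠ 0 → ∃ w, G.Adj w u ∧ D w + 1 = D u) (u : V) :
    G.dist v u = D u := by
  have key : ∀ d u, D u = d → G.Reachable v u ∧ G.dist v u ≤ D u := by
    intro d
    induction d with
    | zero =>
      intro u hu
      have h := (hpos u).mp hu
      subst h
      exact ⟨Reachable.refl _, by simp [hu]⟩
    | succ d ih =>
      intro u hu
      obtain ⟨w, hadj, hw⟩ := hstep u (by omega)
      have hD : D w = d := by omega
      obtain ⟨hr, hle⟩ := ih w hD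
      refine ⟨hr.trans hadj.reachable, ?_⟩
      obtain ⟨p, hp⟩ := hr.exists_walk_length_eq_dist
      calc G.dist v u ≤ (p.concat hadj).length := dist_le _
        _ = p.length + 1 := p.length_concat _
        _ ≤ D u := by omega
  obtain ⟨hr, h1⟩ := key (D u) u rfl
  obtain ⟨p, hp⟩ := hr.exists_walk_length_eq_dist
  have h2 := walk_lower D hlip p.reverse
  rw [Walk.length_reverse] at h2
  rw [(hpos v).mpr rfl] at h2
  omega

lemma cyc_lip (m p q r : ℕ) (hm : 3 ≤ m) (hp : p < m) (hq : q < m) (hr : r < m)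
    (hadj : q + 1 = r ∨ r + 1 = q ∨ (q = 0 ∧ r + 1 = m) ∨ (r = 0 ∧ q + 1 = m)) :
    cd m p r ≤ cd m p q + 1 := by unfold cd; omega

lemma cyc_step (m p q : ℕ) (hm : 3 ≤ m) (hp : p < m) (hq : q < m) (h : cd m p q ≠ 0) :
    ∃ r, r < m ∧ cd m p r + 1 = cd m p q ∧
      (q + 1 = r ∨ r + 1 = q ∨ (q = 0 ∧ r + 1 = m) ∨ (r = 0 ∧ q + 1 = m)) := by
  by_cases hq0 : q = 0
  · by_cases hc : cd m p 1 + 1 = cd m p q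
    · exact ⟨1, by omega, hc, by omega⟩
    · exact ⟨m - 1, by omega, by unfold cd at *; omega, by omega⟩
  · by_cases hqm : q + 1 = m
    · by_cases hc : cd m p (q - 1) + 1 = cd m p q
      · exact ⟨q - 1, by omega, hc, by omega⟩
      · exact ⟨0, by omega, by unfold cd at *; omega, by omega⟩
    · by_cases hc : cd m p (q - 1) + 1 = cd m p q
      · exact ⟨q - 1, by omega, hc, by omega⟩
      · exact ⟨q + 1, by omega, by unfold cd at *; omega, by omega⟩

lemma cd_self (m p : ℕ) : cd m p p = 0 := by unfold cd; omega
lemma cd_eq_zero {m p q : ℕ} (hp : p < m) (hq : q < m) : cd m p q = 0 ↔ p = q := by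
  unfold cd; omega
lemma cd_le (m p q : ℕ) (hp : p < m) (hq : q < m) : cd m p q ≤ m / 2 := by unfold cd; omega
lemma cd_comm (m p q : ℕ) : cd m p q = cd m q p := by unfold cd; omega
lemma cd_zero (m k : ℕ) (hk : k < m) : cd m 0 k = min k (m - k) := by unfold cd; omega
lemma cd_antipode (m p : ℕ) (hm : 3 ≤ m) (hp : p < m) :
    ∃ q, q < m ∧ cd m p q = m / 2 := by
  by_cases h : p + m / 2 < m
  · exact ⟨p + m / 2, h, by unfold cd; omega⟩
  · exact ⟨p + m / 2 - m, by omega, by unfold cd; omega⟩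

lemma ecc_eq {V : Type*} [Fintype V] (G : SimpleGraph V) (v : V) (E : ℕ)
    (hub : ∀ u, G.dist v u ≤ E) (hex : ∃ u, G.dist v u = E) : ecc G v = E := by
  obtain ⟨u, hu⟩ := hex
  have : Nonempty V := ⟨u⟩
  refine le_antisymm (ciSup_le hub) ?_
  calc E = G.dist v u := hu.symm
    _ ≤ ⨆ u, G.dist v u := le_ciSup (Set.Finite.bddAbove (Set.finite_range _)) u

-- sum lemma
lemma sum_min_sub (m c : ℕ) (hm : 3 ≤ m) (hc : c ≤ m / 2) :
    ∑ k ∈ Finset.range m, (min k (m - k) + c - m / 2)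
      = if Even m then c ^ 2 else c ^ 2 + c := by
  induction c with
  | zero =>
    rw [Finset.sum_eq_zero]
    · simp
    · intro k hk
      have := Finset.mem_range.mp hk
      omega
  | succ c ih =>
    have hc' : c ≤ m / 2 := by omega
    have step : ∀ k ∈ Finset.range m, min k (m - k) + (c + 1) - m / 2
        = (min k (m - k) + c - m / 2) + (if m / 2 - c ≤ min k (m - k) then 1 else 0) := by
      intro k hk
      have := Finset.mem_range.mp hk
      split_ifs <;> omega
    rw [Finset.sum_congr rfl step, Finset.sum_add_distrib, ih hc']
    have hcount : ∑ k ∈ Finset.range m, (if m / 2 - c ≤ min k (m - k) then 1 else 0)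
        = m + 1 - 2 * (m / 2 - c) := by
      rw [← Finset.card_filter]
      have : (Finset.range m).filter (fun k => m / 2 - c ≤ min k (m - k))
          = Finset.Icc (m / 2 - c) (m - (m / 2 - c)) := by
        ext k
        simp only [Finset.mem_filter, Finset.mem_range, Finset.mem_Icc]
        omega
      rw [this, Nat.card_Icc]
      omega
    rw [hcount]
    rcases Nat.even_or_odd m with he | ho
    · rw [if_pos he, if_pos he]
      have h2 : m % 2 = 0 := Nat.even_iff.mp he
      have : m + 1 - 2 * (m / 2 - c) = 2 * c + 1 := by omega
      rw [this]; ring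
    · rw [if_neg (Nat.not_even_iff_odd.mpr ho), if_neg (Nat.not_even_iff_odd.mpr ho)]
      have h2 : m % 2 = 1 := Nat.odd_iff.mp ho
      have : m + 1 - 2 * (m / 2 - c) = 2 * c + 2 := by omega
      rw [this]; ring

lemma Unp_adj (n g : ℕ) (p q : Fin g ⊕ Fin (n - g)) :
    (UnpGraph n g).Adj p q ↔ p ≠ q ∧
      ((match p, q with
        | .inl i, .inl j => i.val + 1 = j.val ∨ (i.val = 0 ∧ j.val + 1 = g)
        | .inl i, .inr _ => i.val = 0
        | _, _ => False) ∨
       (match q, p with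
        | .inl i, .inl j => i.val + 1 = j.val ∨ (i.val = 0 ∧ j.val + 1 = g)
        | .inl i, .inr _ => i.val = 0
        | _, _ => False)) := by
  rw [UnpGraph, SimpleGraph.fromRel_adj]




lemma Unp_dist_inl (n g : ℕ) (hg : 3 ≤ g) (hng : g + 1 ≤ n) (a : Fin g)
    (u : Fin g ⊕ Fin (n - g)) :
    (UnpGraph n g).dist (Sum.inl a) u
      = Sum.elim (fun i : Fin g => cd g a.val i.val) (fun _ => cd g a.val 0 + 1) u := by
  apply dist_eq_of
  · rintro (i | t)
    · simp only [Sum.elim_inl, Sum.inl.injEq]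
      constructor
      · intro h; ext; have := a.isLt; have := i.isLt; unfold cd at h; omega
      · rintro rfl; unfold cd; omega
    · simp only [Sum.elim_inr]
      constructor
      · omega
      · intro h; exact absurd h (by simp)
  · rintro (i | t) (j | s) hadj <;> rw [Unp_adj] at hadj <;>
      simp only [Sum.elim_inl, Sum.elim_inr] <;> obtain ⟨hne, hrel⟩ := hadj
    · exact cyc_lip g a i j hg a.isLt i.isLt j.isLt (by omega)
    · -- inl i → inr s : i = 0
      have hi : i.val = 0 := by tauto
      have : cd g a.val i.val = cd g a.val 0 := by rw [hi]
      omega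
    · -- inr t → inl j : j = 0
      have hj : j.val = 0 := by tauto
      have : cd g a.val j.val = cd g a.val 0 := by rw [hj]
      omega
    · simp at hrel
  · rintro (i | t) hu
    · simp only [Sum.elim_inl] at hu
      obtain ⟨r, hr, hcd, hpat⟩ := cyc_step g a i hg a.isLt i.isLt hu
      refine ⟨Sum.inl ⟨r, hr⟩, ?_, ?_⟩
      · rw [Unp_adj]
        constructor
        · simp only [ne_eq, Sum.inl.injEq]
          intro h
          rw [Fin.ext_iff] at h
          simp at h
          omega
        · simp only []
          omega
      · simpa using hcd
    · refine ⟨Sum.inl ⟨0, by omega⟩, ?_, by simp⟩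
      rw [Unp_adj]
      exact ⟨by simp, by simp⟩

lemma Unp_dist_inr (n g : ℕ) (hg : 3 ≤ g) (hng : g + 1 ≤ n) (s : Fin (n - g))
    (u : Fin g ⊕ Fin (n - g)) :
    (UnpGraph n g).dist (Sum.inr s) u
      = Sum.elim (fun i : Fin g => cd g 0 i.val + 1)
          (fun t : Fin (n-g) => if t = s then 0 else 2) u := by
  apply dist_eq_of
  · rintro (i | t)
    · simp only [Sum.elim_inl]
      constructor
      · omega
      · intro h; exact absurd h (by simp)
    · simp only [Sum.elim_inr, Sum.inr.injEq]
      split_ifs with h <;> simp [h]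
  · rintro (i | t) (j | s') hadj <;> rw [Unp_adj] at hadj <;>
      simp only [Sum.elim_inl, Sum.elim_inr] <;> obtain ⟨hne, hrel⟩ := hadj
    · have := cyc_lip g 0 i j hg (by omega) i.isLt j.isLt (by omega)
      omega
    · split_ifs <;> omega
    · have hj : j.val = 0 := by tauto
      have hz : cd g 0 j.val = 0 := by unfold cd; omega
      split_ifs <;> omega
    · simp at hrel
  · rintro (i | t) hu
    · simp only [Sum.elim_inl] at hu
      by_cases hi : i.val = 0
      · refine ⟨Sum.inr s, ?_, ?_⟩
        · rw [Unp_adj]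
          exact ⟨by simp, Or.inr (by simp only []; omega)⟩
        · simp only [Sum.elim_inr, Sum.elim_inl, if_pos rfl, if_true]
          have hz : cd g 0 i.val = 0 := by unfold cd; omega
          omega
      · have hcd : cd g 0 i.val ≠ 0 := by unfold cd; have := i.isLt; omega
        obtain ⟨r, hr, hcdr, hpat⟩ := cyc_step g 0 i hg (by omega) i.isLt hcd
        refine ⟨Sum.inl ⟨r, hr⟩, ?_, ?_⟩
        · rw [Unp_adj]
          constructor
          · simp only [ne_eq, Sum.inl.injEq]
            intro h
            rw [Fin.ext_iff] at h
            simp at h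
            omega
          · simp only []
            omega
        · simpa using hcdr
    · simp only [Sum.elim_inr] at hu
      have hts : t ≠ s := by intro h; rw [if_pos h] at hu; omega
      refine ⟨Sum.inl ⟨0, by omega⟩, ?_, ?_⟩
      · rw [Unp_adj]
        exact ⟨by simp, by simp⟩
      · simp only [Sum.elim_inl, Sum.elim_inr, if_neg hts]
        unfold cd
        omega


lemma sum_cyc (m c : ℕ) (hm : 3 ≤ m) (hc : c ≤ m / 2) :
    ∑ k ∈ Finset.range m, max (m / 2) (min k (m - k) + c)
      = m * (m / 2) + (if Even m then c ^ 2 else c ^ 2 + c) := by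
  have step : ∀ k ∈ Finset.range m, max (m / 2) (min k (m - k) + c)
      = m / 2 + (min k (m - k) + c - m / 2) := by
    intro k hk
    have := Finset.mem_range.mp hk
    omega
  rw [Finset.sum_congr rfl step, Finset.sum_add_distrib, sum_min_sub m c hm hc,
    Finset.sum_const, Finset.card_range, smul_eq_mul]

lemma Unp_ecc_inl (n g : ℕ) (hg : 3 ≤ g) (hng : g + 1 ≤ n) (a : Fin g) :
    ecc (UnpGraph n g) (Sum.inl a) = max (g / 2) (cd g a.val 0 + 1) := by
  apply ecc_eq
  · rintro (i | t) <;> rw [Unp_dist_inl n g hg hng]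
    · exact le_trans (cd_le g a.val i.val a.isLt i.isLt) (le_max_left _ _)
    · exact le_max_right _ _
  · by_cases h : g / 2 ≤ cd g a.val 0 + 1
    · refine ⟨Sum.inr ⟨0, by omega⟩, ?_⟩
      rw [Unp_dist_inl n g hg hng]
      simp only [Sum.elim_inr]
      omega
    · obtain ⟨q, hq, hcd⟩ := cd_antipode g a.val hg a.isLt
      refine ⟨Sum.inl ⟨q, hq⟩, ?_⟩
      rw [Unp_dist_inl n g hg hng]
      simp only [Sum.elim_inl]
      omega

lemma Unp_ecc_inr (n g : ℕ) (hg : 3 ≤ g) (hng : g + 1 ≤ n) (s : Fin (n - g)) :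
    ecc (UnpGraph n g) (Sum.inr s) = g / 2 + 1 := by
  apply ecc_eq
  · rintro (i | t) <;> rw [Unp_dist_inr n g hg hng]
    · have := cd_le g 0 i.val (by omega) i.isLt
      simp only [Sum.elim_inl]
      omega
    · simp only [Sum.elim_inr]
      split_ifs <;> omega
  · obtain ⟨q, hq, hcd⟩ := cd_antipode g 0 hg (by omega)
    refine ⟨Sum.inl ⟨q, hq⟩, ?_⟩
    rw [Unp_dist_inr n g hg hng]
    simp only [Sum.elim_inl]
    omega

lemma totalEcc_Unp (n g : ℕ) (hg : 3 ≤ g) (hng : g + 1 ≤ n) :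
    totalEcc (UnpGraph n g)
      = g * (g / 2) + (if Even g then 1 else 2) + (n - g) * (g / 2 + 1) := by
  rw [totalEcc, Fintype.sum_sum_type]
  have h1 : ∑ a : Fin g, ecc (UnpGraph n g) (Sum.inl a)
      = g * (g / 2) + (if Even g then 1 ^ 2 else 1 ^ 2 + 1) := by
    rw [← sum_cyc g 1 hg (by omega)]
    rw [Finset.sum_congr rfl (fun a _ => Unp_ecc_inl n g hg hng a)]
    rw [Fin.sum_univ_eq_sum_range (fun k => max (g / 2) (cd g k 0 + 1)) g]
    apply Finset.sum_congr rfl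
    intro k hk
    have := Finset.mem_range.mp hk
    have : cd g k 0 = min k (g - k) := by unfold cd; omega
    rw [this]
  have h2 : ∑ t : Fin (n - g), ecc (UnpGraph n g) (Sum.inr t) = (n - g) * (g / 2 + 1) := by
    rw [Finset.sum_congr rfl (fun t _ => Unp_ecc_inr n g hg hng t)]
    simp [Finset.card_univ, mul_comm]
  rw [h1, h2]
  norm_num

lemma Unl_adj (n : ℕ) (p q : Fin (n - (n-1)) ⊕ Fin (n-1)) :
    (UnlGraph n (n-1)).Adj p q ↔ p ≠ q ∧
      ((match p, q with
        | .inl i, .inl j => i.val + 1 = j.val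
        | .inl i, .inr j => i.val + 1 = n - (n-1) ∧ j.val = 0
        | .inr i, .inr j => i.val + 1 = j.val ∨ (i.val = 0 ∧ j.val + 1 = n-1)
        | _, _ => False) ∨
       (match q, p with
        | .inl i, .inl j => i.val + 1 = j.val
        | .inl i, .inr j => i.val + 1 = n - (n-1) ∧ j.val = 0
        | .inr i, .inr j => i.val + 1 = j.val ∨ (i.val = 0 ∧ j.val + 1 = n-1)
        | _, _ => False)) := by
  cases p <;> cases q <;> rw [UnlGraph, SimpleGraph.fromRel_adj]

lemma Unl_dist_inr (n : ℕ) (hn : 5 ≤ n) (a : Fin (n-1))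
    (u : Fin (n - (n-1)) ⊕ Fin (n-1)) :
    (UnlGraph n (n-1)).dist (Sum.inr a) u
      = Sum.elim (fun _ => cd (n-1) a.val 0 + 1) (fun j : Fin (n-1) => cd (n-1) a.val j.val) u := by
  have hone : n - (n-1) = 1 := by omega
  have hm : 3 ≤ n - 1 := by omega
  apply dist_eq_of
  · rintro (i | j)
    · simp only [Sum.elim_inl]
      constructor
      · omega
      · intro h; exact absurd h (by simp)
    · simp only [Sum.elim_inr, Sum.inr.injEq]
      constructor
      · intro h; ext; have := a.isLt; have := j.isLt; unfold cd at h; omega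
      · rintro rfl; unfold cd; omega
  · rintro (i | j) (i' | j') hadj <;> rw [Unl_adj] at hadj <;>
      simp only [Sum.elim_inl, Sum.elim_inr] <;> obtain ⟨hne, hrel⟩ := hadj
    · exfalso
      have hi := i.isLt
      have hi' := i'.isLt
      omega
    · -- inl -> inr j' : j' = 0
      have hj : j'.val = 0 := by tauto
      have : cd (n-1) a.val j'.val = cd (n-1) a.val 0 := by rw [hj]
      omega
    · have hj : j.val = 0 := by tauto
      have : cd (n-1) a.val j.val = cd (n-1) a.val 0 := by rw [hj]
      omega
    · exact cyc_lip (n-1) a.val j.val j'.val hm a.isLt j.isLt j'.isLt (by omega)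
  · rintro (i | j) hu
    · refine ⟨Sum.inr ⟨0, by omega⟩, ?_, by simp⟩
      rw [Unl_adj]
      refine ⟨by simp, Or.inr ⟨?_, rfl⟩⟩
      have := i.isLt
      omega
    · simp only [Sum.elim_inr] at hu
      obtain ⟨r, hr, hcd, hpat⟩ := cyc_step (n-1) a.val j.val hm a.isLt j.isLt hu
      refine ⟨Sum.inr ⟨r, hr⟩, ?_, by simpa using hcd⟩
      rw [Unl_adj]
      constructor
      · simp only [ne_eq, Sum.inr.injEq]
        intro h
        rw [Fin.ext_iff] at h
        simp at h
        omega
      · simp only []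
        omega

lemma Unl_dist_inl (n : ℕ) (hn : 5 ≤ n) (t : Fin (n - (n-1)))
    (u : Fin (n - (n-1)) ⊕ Fin (n-1)) :
    (UnlGraph n (n-1)).dist (Sum.inl t) u
      = Sum.elim (fun _ : Fin (n - (n-1)) => 0)
          (fun j : Fin (n-1) => cd (n-1) 0 j.val + 1) u := by
  have hone : n - (n-1) = 1 := by omega
  have hm : 3 ≤ n - 1 := by omega
  apply dist_eq_of
  · rintro (i | j)
    · simp only [Sum.elim_inl, Sum.inl.injEq]
      constructor
      · intro _; ext; have := i.isLt; have := t.isLt; omega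
      · intro _; trivial
    · simp only [Sum.elim_inr]
      constructor
      · omega
      · intro h; exact absurd h (by simp)
  · rintro (i | j) (i' | j') hadj <;> rw [Unl_adj] at hadj <;>
      simp only [Sum.elim_inl, Sum.elim_inr] <;> obtain ⟨hne, hrel⟩ := hadj
    · omega
    · have hj : j'.val = 0 := by tauto
      have : cd (n-1) 0 j'.val = 0 := by unfold cd; omega
      omega
    · omega
    · have := cyc_lip (n-1) 0 j.val j'.val hm (by omega) j.isLt j'.isLt (by omega)
      omega
  · rintro (i | j) hu
    · simp at hu
    · simp only [Sum.elim_inr] at hu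
      by_cases hj : j.val = 0
      · refine ⟨Sum.inl t, ?_, ?_⟩
        · rw [Unl_adj]
          refine ⟨by simp, Or.inl ⟨?_, ?_⟩⟩
          · have := t.isLt
            omega
          · omega
        · simp only [Sum.elim_inl, Sum.elim_inr]
          have : cd (n-1) 0 j.val = 0 := by unfold cd; omega
          omega
      · have hcd : cd (n-1) 0 j.val ≠ 0 := by unfold cd; have := j.isLt; omega
        obtain ⟨r, hr, hcd2, hpat⟩ := cyc_step (n-1) 0 j.val hm (by omega) j.isLt hcd
        refine ⟨Sum.inr ⟨r, hr⟩, ?_, by simpa using hcd2⟩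
        rw [Unl_adj]
        constructor
        · simp only [ne_eq, Sum.inr.injEq]
          intro h
          rw [Fin.ext_iff] at h
          simp at h
          omega
        · simp only []
          omega

lemma Unl_ecc_inr (n : ℕ) (hn : 5 ≤ n) (a : Fin (n-1)) :
    ecc (UnlGraph n (n-1)) (Sum.inr a) = max ((n-1) / 2) (cd (n-1) a.val 0 + 1) := by
  have hm : 3 ≤ n - 1 := by omega
  apply ecc_eq
  · rintro (i | j) <;> rw [Unl_dist_inr n hn]
    · exact le_max_right _ _
    · exact le_trans (cd_le (n-1) a.val j.val a.isLt j.isLt) (le_max_left _ _)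
  · by_cases h : (n-1) / 2 ≤ cd (n-1) a.val 0 + 1
    · refine ⟨Sum.inl ⟨0, by omega⟩, ?_⟩
      rw [Unl_dist_inr n hn]
      simp only [Sum.elim_inl]
      omega
    · obtain ⟨q, hq, hcd⟩ := cd_antipode (n-1) a.val hm a.isLt
      refine ⟨Sum.inr ⟨q, hq⟩, ?_⟩
      rw [Unl_dist_inr n hn]
      simp only [Sum.elim_inr]
      omega

lemma Unl_ecc_inl (n : ℕ) (hn : 5 ≤ n) (t : Fin (n - (n-1))) :
    ecc (UnlGraph n (n-1)) (Sum.inl t) = (n-1) / 2 + 1 := by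
  have hm : 3 ≤ n - 1 := by omega
  apply ecc_eq
  · rintro (i | j) <;> rw [Unl_dist_inl n hn]
    · simp
    · have := cd_le (n-1) 0 j.val (by omega) j.isLt
      simp only [Sum.elim_inr]
      omega
  · obtain ⟨q, hq, hcd⟩ := cd_antipode (n-1) 0 hm (by omega)
    refine ⟨Sum.inr ⟨q, hq⟩, ?_⟩
    rw [Unl_dist_inl n hn]
    simp only [Sum.elim_inr]
    omega

lemma totalEcc_Unl (n : ℕ) (hn : 5 ≤ n) :
    totalEcc (UnlGraph n (n-1))
      = n * ((n-1) / 2) + (if Even (n-1) then 2 else 3) := by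
  have hm : 3 ≤ n - 1 := by omega
  have hone : n - (n-1) = 1 := by omega
  rw [totalEcc, Fintype.sum_sum_type]
  have h1 : ∑ t : Fin (n - (n-1)), ecc (UnlGraph n (n-1)) (Sum.inl t)
      = (n-1) / 2 + 1 := by
    rw [Finset.sum_congr rfl (fun t _ => Unl_ecc_inl n hn t)]
    simp [Finset.card_univ, hone]
  have h2 : ∑ a : Fin (n-1), ecc (UnlGraph n (n-1)) (Sum.inr a)
      = (n-1) * ((n-1)/2) + (if Even (n-1) then 1 ^ 2 else 1 ^ 2 + 1) := by
    rw [← sum_cyc (n-1) 1 hm (by omega)]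
    rw [Finset.sum_congr rfl (fun a _ => Unl_ecc_inr n hn a)]
    rw [Fin.sum_univ_eq_sum_range (fun k => max ((n-1) / 2) (cd (n-1) k 0 + 1)) (n-1)]
    apply Finset.sum_congr rfl
    intro k hk
    have := Finset.mem_range.mp hk
    have : cd (n-1) k 0 = min k (n-1-k) := by unfold cd; omega
    rw [this]
  rw [h1, h2]
  have hnm : (n-1) * ((n-1)/2) + (n-1)/2 = n * ((n-1)/2) := by
    rw [Nat.sub_one_mul]
    have : (n-1)/2 ≤ n * ((n-1)/2) := Nat.le_mul_of_pos_left _ (by omega)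
    omega
  split_ifs <;> omega

/-- distance function for twoCyclesGlued, on values -/
def Dc (m1 m2 v u : ℕ) : ℕ :=
  if v < m1 then
    (if u < m1 then cd m1 v u else cd m1 v 0 + cd m2 0 (u - m1 + 1))
  else
    (if u < m1 then cd m2 0 (v - m1 + 1) + cd m1 0 u else cd m2 (v - m1 + 1) (u - m1 + 1))

def Rc (m1 m2 i j : ℕ) : Prop :=
  (i + 1 = j ∧ j < m1) ∨ (i = 0 ∧ j + 1 = m1) ∨ (i = 0 ∧ j = m1)
    ∨ (m1 ≤ i ∧ i + 1 = j) ∨ (i = 0 ∧ j + 2 = m1 + m2)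

lemma Dc_pos (m1 m2 v u : ℕ) (h2 : 3 ≤ m2) (h12 : m2 ≤ m1)
    (hv : v < m1 + m2 - 1) (hu : u < m1 + m2 - 1) :
    Dc m1 m2 v u = 0 ↔ u = v := by
  unfold Dc cd; split_ifs <;> omega

lemma cd_comm' (m p q : ℕ) : cd m p q = cd m q p := by unfold cd; omega

lemma cd_self' (m p : ℕ) : cd m p p = 0 := by unfold cd; omega

lemma Dc_lip (m1 m2 v u w : ℕ) (h2 : 3 ≤ m2) (h12 : m2 ≤ m1)
    (hv : v < m1 + m2 - 1) (hu : u < m1 + m2 - 1) (hw : w < m1 + m2 - 1)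
    (hrel : Rc m1 m2 u w ∨ Rc m1 m2 w u) :
    Dc m1 m2 v w ≤ Dc m1 m2 v u + 1 := by
  have hm1 : 3 ≤ m1 := by omega
  unfold Rc at hrel
  by_cases hu1 : u < m1 <;> by_cases hw1 : w < m1
  · -- both in cycle 1
    have hpat : w + 1 = u ∨ u + 1 = w ∨ (w = 0 ∧ u + 1 = m1) ∨ (u = 0 ∧ w + 1 = m1) := by
      omega
    by_cases hv1 : v < m1
    · simp only [Dc, if_pos hv1, if_pos hu1, if_pos hw1]
      exact cyc_lip m1 v u w hm1 (by omega) hu1 hw1 (by tauto)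
    · simp only [Dc, if_neg hv1, if_pos hu1, if_pos hw1]
      have := cyc_lip m1 0 u w hm1 (by omega) hu1 hw1 (by tauto)
      omega
  · -- u in cycle 1, w in cycle 2 : u = 0, w ∈ {m1, m1+m2-2}
    have hu0 : u = 0 ∧ (w = m1 ∨ w + 2 = m1 + m2) := by omega
    have hcw : cd m2 0 (w - m1 + 1) = 1 := by unfold cd; omega
    by_cases hv1 : v < m1
    · simp only [Dc, if_pos hv1, if_pos hu1, if_neg hw1]
      have : cd m1 v u = cd m1 v 0 := by rw [hu0.1]
      omega
    · simp only [Dc, if_neg hv1, if_pos hu1, if_neg hw1]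
      have hb := cyc_lip m2 (v - m1 + 1) 0 (w - m1 + 1) h2 (by omega) (by omega) (by omega)
        (by omega)
      have e1 : cd m2 (v - m1 + 1) 0 = cd m2 0 (v - m1 + 1) := cd_comm' _ _ _
      have e2 : cd m2 (v - m1 + 1) (w - m1 + 1) = cd m2 0 (v-m1+1) + 1 ∨
          cd m2 (v - m1 + 1) (w - m1 + 1) ≤ cd m2 0 (v-m1+1) := by omega
      have e3 : cd m1 0 u = 0 := by rw [hu0.1]; exact cd_self' _ _
      omega
  · -- u in cycle 2, w in cycle 1 : w = 0
    have hw0 : w = 0 ∧ (u = m1 ∨ u + 2 = m1 + m2) := by omega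
    have hcu : cd m2 0 (u - m1 + 1) = 1 := by unfold cd; omega
    by_cases hv1 : v < m1
    · simp only [Dc, if_pos hv1, if_neg hu1, if_pos hw1]
      have : cd m1 v w = cd m1 v 0 := by rw [hw0.1]
      omega
    · simp only [Dc, if_neg hv1, if_neg hu1, if_pos hw1]
      have hb := cyc_lip m2 (v - m1 + 1) (u - m1 + 1) 0 h2 (by omega) (by omega) (by omega)
        (by omega)
      have e1 : cd m2 (v - m1 + 1) 0 = cd m2 0 (v - m1 + 1) := cd_comm' _ _ _
      have e3 : cd m1 0 w = 0 := by rw [hw0.1]; exact cd_self' _ _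
      omega
  · -- both in cycle 2
    have hpat : (u - m1 + 1) + 1 = (w - m1 + 1) ∨ (w - m1 + 1) + 1 = (u - m1 + 1) := by omega
    by_cases hv1 : v < m1
    · simp only [Dc, if_pos hv1, if_neg hu1, if_neg hw1]
      have := cyc_lip m2 0 (u - m1 + 1) (w - m1 + 1) h2 (by omega) (by omega) (by omega)
        (by tauto)
      omega
    · simp only [Dc, if_neg hv1, if_neg hu1, if_neg hw1]
      exact cyc_lip m2 (v - m1 + 1) (u - m1 + 1) (w - m1 + 1) h2 (by omega) (by omega)
        (by omega) (by tauto)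


lemma Rc1 (m1 m2 i j : ℕ) (h : i + 1 = j) (h' : j < m1) : Rc m1 m2 i j :=
  Or.inl ⟨h, h'⟩
lemma Rc2 (m1 m2 i j : ℕ) (h : i = 0) (h' : j + 1 = m1) : Rc m1 m2 i j :=
  Or.inr (Or.inl ⟨h, h'⟩)
lemma Rc3 (m1 m2 i j : ℕ) (h : i = 0) (h' : j = m1) : Rc m1 m2 i j :=
  Or.inr (Or.inr (Or.inl ⟨h, h'⟩))
lemma Rc4 (m1 m2 i j : ℕ) (h : m1 ≤ i) (h' : i + 1 = j) : Rc m1 m2 i j :=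
  Or.inr (Or.inr (Or.inr (Or.inl ⟨h, h'⟩)))
lemma Rc5 (m1 m2 i j : ℕ) (h : i = 0) (h' : j + 2 = m1 + m2) : Rc m1 m2 i j :=
  Or.inr (Or.inr (Or.inr (Or.inr ⟨h, h'⟩)))

/-- map a cycle-1 pattern to the relation -/
lemma Rc_pat1 (m1 m2 u r : ℕ) (hu : u < m1) (hr : r < m1)
    (hpat : u + 1 = r ∨ r + 1 = u ∨ (u = 0 ∧ r + 1 = m1) ∨ (r = 0 ∧ u + 1 = m1)) :
    Rc m1 m2 r u ∨ Rc m1 m2 u r := by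
  rcases hpat with h | h | ⟨h, h'⟩ | ⟨h, h'⟩
  · exact Or.inr (Rc1 m1 m2 u r h hr)
  · exact Or.inl (Rc1 m1 m2 r u h hu)
  · exact Or.inr (Rc2 m1 m2 u r h h')
  · exact Or.inl (Rc2 m1 m2 r u h h')

/-- map a cycle-2 position pattern (both positions ≥ 1) to the relation.
    positions p = u - m1 + 1, r = w - m1 + 1 -/
lemma Rc_pat2 (m1 m2 u w : ℕ) (hu : m1 ≤ u) (hw : m1 ≤ w)
    (hpat : (u - m1 + 1) + 1 = (w - m1 + 1) ∨ (w - m1 + 1) + 1 = (u - m1 + 1)) :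
    Rc m1 m2 w u ∨ Rc m1 m2 u w := by
  rcases hpat with h | h
  · exact Or.inr (Rc4 m1 m2 u w hu (by omega))
  · exact Or.inl (Rc4 m1 m2 w u hw (by omega))

/-- relation between vertex 0 and a cycle-2 vertex at position 1 or m2-1 -/
lemma Rc_hub (m1 m2 u : ℕ) (h2 : 3 ≤ m2) (hu : m1 ≤ u)
    (hpat : u - m1 + 1 = 1 ∨ (u - m1 + 1) + 1 = m2) :
    Rc m1 m2 0 u := by
  rcases hpat with h | h
  · exact Rc3 m1 m2 0 u rfl (by omega)
  · exact Rc5 m1 m2 0 u rfl (by omega)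

lemma Dc_step (m1 m2 v u : ℕ) (h2 : 3 ≤ m2) (h12 : m2 ≤ m1)
    (hv : v < m1 + m2 - 1) (hu : u < m1 + m2 - 1) (h : Dc m1 m2 v u ≠ 0) :
    ∃ w, w < m1 + m2 - 1 ∧ (Rc m1 m2 w u ∨ Rc m1 m2 u w) ∧
      Dc m1 m2 v w + 1 = Dc m1 m2 v u := by
  have hm1 : 3 ≤ m1 := by omega
  by_cases hv1 : v < m1 <;> by_cases hu1 : u < m1
  · -- v, u in cycle 1
    rw [Dc, if_pos hv1, if_pos hu1] at h
    obtain ⟨r, hr, hcd, hpat⟩ := cyc_step m1 v u hm1 hv1 hu1 h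
    refine ⟨r, by omega, Rc_pat1 m1 m2 u r hu1 hr hpat, ?_⟩
    rw [Dc, if_pos hv1, if_pos hr, Dc, if_pos hv1, if_pos hu1]
    exact hcd
  · -- v in cycle 1, u in cycle 2
    have hp : 1 ≤ u - m1 + 1 ∧ u - m1 + 1 < m2 := by omega
    have hpz : cd m2 0 (u - m1 + 1) ≠ 0 := by unfold cd; omega
    obtain ⟨r, hr, hcd, hpat⟩ := cyc_step m2 0 (u - m1 + 1) h2 (by omega) (by omega) hpz
    by_cases hr0 : r = 0
    · have hz : cd m2 0 r = 0 := by rw [hr0]; exact cd_self' _ _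
      refine ⟨0, by omega, Or.inl (Rc_hub m1 m2 u h2 (by omega) (by omega)), ?_⟩
      rw [Dc, if_pos hv1, if_pos (show (0:ℕ) < m1 by omega), Dc, if_pos hv1, if_neg hu1]
      omega
    · refine ⟨m1 + r - 1, by omega, Rc_pat2 m1 m2 u (m1 + r - 1) (by omega) (by omega)
        (by omega), ?_⟩
      rw [Dc, if_pos hv1, if_neg (show ¬ (m1 + r - 1 < m1) by omega),
        Dc, if_pos hv1, if_neg hu1]
      have e : m1 + r - 1 - m1 + 1 = r := by omega
      rw [e]
      omega
  · -- v in cycle 2, u in cycle 1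
    by_cases hu0 : u = 0
    · rw [Dc, if_neg hv1, if_pos hu1] at h
      have hz : cd m1 0 u = 0 := by rw [hu0]; exact cd_self' _ _
      have hb : cd m2 (v - m1 + 1) 0 ≠ 0 := by rw [cd_comm']; omega
      obtain ⟨r, hr, hcd, hpat⟩ := cyc_step m2 (v - m1 + 1) 0 h2 (by omega) (by omega) hb
      have hr1 : 1 ≤ r := by rcases hpat with h' | h' | h' | h' <;> omega
      refine ⟨m1 + r - 1, by omega, ?_, ?_⟩
      · subst hu0
        exact Or.inr (Rc_hub m1 m2 (m1 + r - 1) h2 (by omega) (by omega))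
      · rw [Dc, if_neg hv1, if_neg (show ¬ (m1 + r - 1 < m1) by omega),
          Dc, if_neg hv1, if_pos hu1]
        have e : m1 + r - 1 - m1 + 1 = r := by omega
        rw [e]
        have e2 : cd m2 (v - m1 + 1) 0 = cd m2 0 (v - m1 + 1) := cd_comm' _ _ _
        omega
    · rw [Dc, if_neg hv1, if_pos hu1] at h
      have hz : cd m1 0 u ≠ 0 := by unfold cd; omega
      obtain ⟨r, hr, hcd, hpat⟩ := cyc_step m1 0 u hm1 (by omega) hu1 hz
      refine ⟨r, by omega, Rc_pat1 m1 m2 u r hu1 hr hpat, ?_⟩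
      rw [Dc, if_neg hv1, if_pos hr, Dc, if_neg hv1, if_pos hu1]
      omega
  · -- both in cycle 2
    rw [Dc, if_neg hv1, if_neg hu1] at h
    have hp : 1 ≤ u - m1 + 1 ∧ u - m1 + 1 < m2 := by omega
    obtain ⟨r, hr, hcd, hpat⟩ := cyc_step m2 (v - m1 + 1) (u - m1 + 1) h2 (by omega)
      (by omega) h
    by_cases hr0 : r = 0
    · have hhub : u - m1 + 1 = 1 ∨ (u - m1 + 1) + 1 = m2 := by
        rcases hpat with h' | h' | h' | h' <;> omega
      refine ⟨0, by omega, Or.inl (Rc_hub m1 m2 u h2 (by omega) hhub), ?_⟩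
      rw [Dc, if_neg hv1, if_pos (show (0:ℕ) < m1 by omega), Dc, if_neg hv1, if_neg hu1]
      have hz : cd m1 0 0 = 0 := cd_self' _ _
      have e2 : cd m2 (v - m1 + 1) 0 = cd m2 0 (v - m1 + 1) := cd_comm' _ _ _
      rw [hr0] at hcd
      omega
    · have hpat2 : (u - m1 + 1) + 1 = r ∨ r + 1 = (u - m1 + 1) := by
        rcases hpat with h' | h' | h' | h' <;> omega
      refine ⟨m1 + r - 1, by omega, Rc_pat2 m1 m2 u (m1 + r - 1) (by omega) (by omega)
        (by omega), ?_⟩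
      rw [Dc, if_neg hv1, if_neg (show ¬ (m1 + r - 1 < m1) by omega),
        Dc, if_neg hv1, if_neg hu1]
      have e : m1 + r - 1 - m1 + 1 = r := by omega
      rw [e]
      omega













lemma tcg_adj (m1 m2 : ℕ) (p q : Fin (m1 + m2 - 1)) :
    (twoCyclesGlued m1 m2).Adj p q ↔ p ≠ q ∧ (Rc m1 m2 p.val q.val ∨ Rc m1 m2 q.val p.val) := by
  rw [twoCyclesGlued, SimpleGraph.fromRel_adj]
  rfl

lemma tcg_dist (m1 m2 : ℕ) (h2 : 3 ≤ m2) (h12 : m2 ≤ m1) (v u : Fin (m1 + m2 - 1)) :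
    (twoCyclesGlued m1 m2).dist v u = Dc m1 m2 v.val u.val := by
  apply dist_eq_of (D := fun u : Fin (m1 + m2 - 1) => Dc m1 m2 v.val u.val)
  · intro x
    rw [Dc_pos m1 m2 v.val x.val h2 h12 v.isLt x.isLt]
    exact ⟨fun h => Fin.ext h, fun h => congrArg Fin.val h⟩
  · intro x w hadj
    rw [tcg_adj] at hadj
    exact Dc_lip m1 m2 v.val x.val w.val h2 h12 v.isLt x.isLt w.isLt hadj.2
  · intro x hx
    obtain ⟨w, hw, hrel, hdec⟩ := Dc_step m1 m2 v.val x.val h2 h12 v.isLt x.isLt hx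
    refine ⟨⟨w, hw⟩, ?_, hdec⟩
    rw [tcg_adj]
    refine ⟨?_, hrel⟩
    intro hcon
    have he : w = x.val := congrArg Fin.val hcon
    rw [he] at hdec
    omega

lemma tcg_ecc_c1 (m1 m2 : ℕ) (h2 : 3 ≤ m2) (h12 : m2 ≤ m1) (v : Fin (m1 + m2 - 1))
    (hv : v.val < m1) :
    ecc (twoCyclesGlued m1 m2) v = max (m1 / 2) (cd m1 0 v.val + m2 / 2) := by
  have hm1 : 3 ≤ m1 := by omega
  have hvc : cd m1 v.val 0 = cd m1 0 v.val := cd_comm' _ _ _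
  apply ecc_eq
  · intro x
    rw [tcg_dist m1 m2 h2 h12]
    by_cases hx : x.val < m1
    · rw [Dc, if_pos hv, if_pos hx]
      exact le_trans (cd_le m1 v.val x.val hv hx) (le_max_left _ _)
    · rw [Dc, if_pos hv, if_neg hx]
      have := cd_le m2 0 (x.val - m1 + 1) (by omega) (by have := x.isLt; omega)
      have := le_max_right (m1 / 2) (cd m1 0 v.val + m2 / 2)
      omega
  · by_cases hcase : m1 / 2 ≤ cd m1 0 v.val + m2 / 2
    · obtain ⟨q, hq, hcd⟩ := cd_antipode m2 0 h2 (by omega)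
      have hq1 : 1 ≤ q := by
        rcases Nat.eq_zero_or_pos q with h | h
        · exfalso; rw [h, cd_self'] at hcd; omega
        · omega
      refine ⟨⟨m1 + q - 1, by omega⟩, ?_⟩
      rw [tcg_dist m1 m2 h2 h12, Dc, if_pos hv, if_neg (by simp; omega)]
      have e : m1 + q - 1 - m1 + 1 = q := by omega
      simp only [e]
      omega
    · obtain ⟨q, hq, hcd⟩ := cd_antipode m1 v.val hm1 hv
      refine ⟨⟨q, by omega⟩, ?_⟩
      rw [tcg_dist m1 m2 h2 h12, Dc, if_pos hv, if_pos (by simpa using hq)]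
      simp only []
      omega

lemma tcg_ecc_c2 (m1 m2 : ℕ) (h2 : 3 ≤ m2) (h12 : m2 ≤ m1) (v : Fin (m1 + m2 - 1))
    (hv : ¬ v.val < m1) :
    ecc (twoCyclesGlued m1 m2) v = cd m2 0 (v.val - m1 + 1) + m1 / 2 := by
  have hm1 : 3 ≤ m1 := by omega
  apply ecc_eq
  · intro x
    rw [tcg_dist m1 m2 h2 h12]
    by_cases hx : x.val < m1
    · rw [Dc, if_neg hv, if_pos hx]
      have := cd_le m1 0 x.val (by omega) hx
      omega
    · rw [Dc, if_neg hv, if_neg hx]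
      have h1 := cd_le m2 (v.val - m1 + 1) (x.val - m1 + 1) (by have := v.isLt; omega)
        (by have := x.isLt; omega)
      have h3 : m2 / 2 ≤ m1 / 2 := by omega
      omega
  · obtain ⟨q, hq, hcd⟩ := cd_antipode m1 0 hm1 (by omega)
    refine ⟨⟨q, by omega⟩, ?_⟩
    rw [tcg_dist m1 m2 h2 h12, Dc, if_neg hv, if_pos (by simpa using hq)]
    simp only []
    omega

lemma sum_min (m : ℕ) (hm : 3 ≤ m) :
    ∑ k ∈ Finset.range m, min k (m - k)
      = if Even m then (m / 2) ^ 2 else (m / 2) ^ 2 + m / 2 := by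
  rw [← sum_min_sub m (m / 2) hm le_rfl]
  apply Finset.sum_congr rfl
  intro k hk
  have := Finset.mem_range.mp hk
  omega

lemma totalEcc_tcg (m1 m2 : ℕ) (h2 : 3 ≤ m2) (h12 : m2 ≤ m1) :
    totalEcc (twoCyclesGlued m1 m2)
      = m1 * (m1 / 2) + (m2 - 1) * (m1 / 2)
        + (if Even m1 then (m2 / 2) ^ 2 else (m2 / 2) ^ 2 + m2 / 2)
        + (if Even m2 then (m2 / 2) ^ 2 else (m2 / 2) ^ 2 + m2 / 2) := by
  have hm1 : 3 ≤ m1 := by omega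
  set N := m1 + m2 - 1 with hN
  set F : ℕ → ℕ := fun k =>
    if k < m1 then max (m1 / 2) (cd m1 0 k + m2 / 2) else cd m2 0 (k - m1 + 1) + m1 / 2
    with hF
  have h0 : totalEcc (twoCyclesGlued m1 m2) = ∑ k ∈ Finset.range N, F k := by
    rw [totalEcc, ← Fin.sum_univ_eq_sum_range F N]
    apply Finset.sum_congr rfl
    intro v _
    by_cases hv : v.val < m1
    · rw [tcg_ecc_c1 m1 m2 h2 h12 v hv, hF]
      simp only [if_pos hv]
    · rw [tcg_ecc_c2 m1 m2 h2 h12 v hv, hF]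
      simp only [if_neg hv]
  rw [h0]
  have hsplit : ∑ k ∈ Finset.range N, F k
      = ∑ k ∈ Finset.Ico 0 m1, F k + ∑ k ∈ Finset.Ico m1 N, F k := by
    rw [Finset.range_eq_Ico, ← Finset.sum_Ico_consecutive _ (Nat.zero_le m1) (by omega)]
  rw [hsplit]
  have hS1 : ∑ k ∈ Finset.Ico 0 m1, F k
      = m1 * (m1 / 2) + (if Even m1 then (m2 / 2) ^ 2 else (m2 / 2) ^ 2 + m2 / 2) := by
    rw [← Finset.range_eq_Ico, ← sum_cyc m1 (m2 / 2) hm1 (by omega)]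
    apply Finset.sum_congr rfl
    intro k hk
    have hk' := Finset.mem_range.mp hk
    rw [hF]
    simp only [if_pos hk']
    have : cd m1 0 k = min k (m1 - k) := by unfold cd; omega
    rw [this]
  have hS2 : ∑ k ∈ Finset.Ico m1 N, F k
      = (m2 - 1) * (m1 / 2) + (if Even m2 then (m2 / 2) ^ 2 else (m2 / 2) ^ 2 + m2 / 2) := by
    rw [Finset.sum_Ico_eq_sum_range]
    have hNm : N - m1 = m2 - 1 := by omega
    rw [hNm]
    have hcong : ∀ i ∈ Finset.range (m2 - 1),
        F (m1 + i) = min (i + 1) (m2 - (i + 1)) + m1 / 2 := by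
      intro i hi
      have hi' := Finset.mem_range.mp hi
      rw [hF]
      simp only [if_neg (show ¬ m1 + i < m1 by omega)]
      have e : m1 + i - m1 + 1 = i + 1 := by omega
      rw [e]
      have : cd m2 0 (i + 1) = min (i + 1) (m2 - (i + 1)) := by unfold cd; omega
      rw [this]
    rw [Finset.sum_congr rfl hcong, Finset.sum_add_distrib, Finset.sum_const,
      Finset.card_range, smul_eq_mul]
    have hshift : ∑ i ∈ Finset.range (m2 - 1), min (i + 1) (m2 - (i + 1))
        = ∑ k ∈ Finset.range m2, min k (m2 - k) := by
      have e : m2 = (m2 - 1) + 1 := by omega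
      rw [e, Finset.sum_range_succ' (fun k => min k ((m2 - 1) + 1 - k)) (m2 - 1)]
      simp
    rw [hshift, sum_min m2 h2]
    omega
  rw [hS1, hS2]
  omega

-- final arithmetic for part (i)
lemma final1 (m1 m2 : ℕ) (h2 : 3 ≤ m2) (h12 : m2 ≤ m1) (hn : 5 ≤ m1 + m2 - 1) :
    (m1 * (m1 / 2) + (m2 - 1) * (m1 / 2)
        + (if Even m1 then (m2 / 2) ^ 2 else (m2 / 2) ^ 2 + m2 / 2)
        + (if Even m2 then (m2 / 2) ^ 2 else (m2 / 2) ^ 2 + m2 / 2))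
      ≤ (m1 + m2 - 1) * ((m1 + m2 - 1 - 1) / 2)
        + (if Even (m1 + m2 - 1 - 1) then 2 else 3) ∧
    ((m1 * (m1 / 2) + (m2 - 1) * (m1 / 2)
        + (if Even m1 then (m2 / 2) ^ 2 else (m2 / 2) ^ 2 + m2 / 2)
        + (if Even m2 then (m2 / 2) ^ 2 else (m2 / 2) ^ 2 + m2 / 2))
      = (m1 + m2 - 1) * ((m1 + m2 - 1 - 1) / 2)
        + (if Even (m1 + m2 - 1 - 1) then 2 else 3) ↔ Even m1 ∧ m2 = 3) := by
  rcases Nat.even_or_odd m1 with ⟨a, ha⟩ | ⟨a, ha⟩ <;>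
    rcases Nat.even_or_odd m2 with ⟨b, hb⟩ | ⟨b, hb⟩
  · -- even, even
    subst ha hb
    have hb2 : 2 ≤ b := by omega
    have ha2 : 2 ≤ a := by omega
    rw [if_pos ⟨a, rfl⟩, if_pos ⟨b, rfl⟩, if_pos (show Even (a+a+(b+b)-1-1) by
      rw [Nat.even_iff]; omega)]
    rw [show (a+a)/2 = a by omega, show (b+b)/2 = b by omega,
      show (a+a+(b+b)-1-1)/2 = a+b-1 by omega]
    have key : (a+a) * a + (b+b-1) * a + b^2 + b^2 + (2*a-3)*(b-1)
        = (a+a+(b+b)-1) * (a+b-1) + 2 := by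
      zify [show 3 ≤ 2*a by omega, show 1 ≤ b by omega, show 1 ≤ a + b by omega,
        show 1 ≤ b + b by omega, show 1 ≤ a+a+(b+b) by omega]
      ring
    have hpos : 1 ≤ (2*a-3)*(b-1) := by
      have : 1 ≤ 2*a-3 := by omega
      have : 1 ≤ b-1 := by omega
      nlinarith
    constructor
    · omega
    · constructor
      · intro h; omega
      · rintro ⟨-, h⟩; omega
  · -- even, odd
    subst ha hb
    have ha2 : 2 ≤ a := by omega
    have hb1 : 1 ≤ b := by omega
    rw [if_pos ⟨a, rfl⟩, if_neg (by rw [Nat.even_iff]; omega),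
      if_neg (show ¬ Even (a+a+(2*b+1)-1-1) by rw [Nat.even_iff]; omega)]
    rw [show (a+a)/2 = a by omega, show (2*b+1)/2 = b by omega,
      show (a+a+(2*b+1)-1-1)/2 = a+b-1 by omega]
    have key : (a+a) * a + (2*b+1-1) * a + b^2 + (b^2+b) + (2*a-3)*(b-1)
        = (a+a+(2*b+1)-1) * (a+b-1) + 3 := by
      zify [show 3 ≤ 2*a by omega, show 1 ≤ b by omega, show 1 ≤ a + b by omega,
        show 1 ≤ 2*b+1 by omega, show 1 ≤ a+a+(2*b+1) by omega]
      ring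
    constructor
    · have : 0 ≤ (2*a-3)*(b-1) := Nat.zero_le _
      omega
    · constructor
      · intro h
        have hz : (2*a-3)*(b-1) = 0 := by omega
        rcases Nat.mul_eq_zero.mp hz with h' | h'
        · omega
        · exact ⟨⟨a, rfl⟩, by omega⟩
      · rintro ⟨-, h⟩
        have : b = 1 := by omega
        subst this
        omega
  · -- odd, even
    subst ha hb
    have hb2 : 2 ≤ b := by omega
    have hab : b ≤ a := by omega
    rw [if_neg (by rw [Nat.even_iff]; omega), if_pos ⟨b, rfl⟩,
      if_neg (show ¬ Even (2*a+1+(b+b)-1-1) by rw [Nat.even_iff]; omega)]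
    rw [show (2*a+1)/2 = a by omega, show (b+b)/2 = b by omega,
      show (2*a+1+(b+b)-1-1)/2 = a+b-1 by omega]
    have key : (2*a+1) * a + (b+b-1) * a + (b^2+b) + b^2 + (2*a-3)*(b-1)
        = (2*a+1+(b+b)-1) * (a+b-1) + 3 := by
      zify [show 3 ≤ 2*a by omega, show 1 ≤ b by omega, show 1 ≤ a + b by omega,
        show 1 ≤ b+b by omega, show 1 ≤ 2*a+1+(b+b) by omega]
      ring
    have hpos : 1 ≤ (2*a-3)*(b-1) := by
      have : 1 ≤ 2*a-3 := by omega
      have : 1 ≤ b-1 := by omega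
      nlinarith
    constructor
    · omega
    · constructor
      · intro h; omega
      · rintro ⟨he, -⟩
        exfalso
        rw [Nat.even_iff] at he
        omega
  · -- odd, odd
    subst ha hb
    have hb1 : 1 ≤ b := by omega
    have hab : b ≤ a := by omega
    rw [if_neg (by rw [Nat.even_iff]; omega), if_neg (by rw [Nat.even_iff]; omega),
      if_pos (show Even (2*a+1+(2*b+1)-1-1) by rw [Nat.even_iff]; omega)]
    rw [show (2*a+1)/2 = a by omega, show (2*b+1)/2 = b by omega,
      show (2*a+1+(2*b+1)-1-1)/2 = a+b by omega]
    have key : (2*a+1) * a + (2*b+1-1) * a + (b^2+b) + (b^2+b) + (b*(2*a-1) + 2)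
        = (2*a+1+(2*b+1)-1) * (a+b) + 2 := by
      zify [show 1 ≤ 2*a by omega, show 1 ≤ 2*b+1 by omega,
        show 1 ≤ 2*a+1+(2*b+1) by omega]
      ring
    have hpos : 2 ≤ b*(2*a-1) + 2 := by omega
    constructor
    · omega
    · constructor
      · intro h; omega
      · rintro ⟨he, -⟩
        exfalso
        rw [Nat.even_iff] at he
        omega

-- final arithmetic for part (ii)
lemma final2 (n g : ℕ) (hn : 5 ≤ n) (hg : 3 ≤ g) (hgn : g ≤ n - 2) :
    (g * (g / 2) + (if Even g then 1 else 2) + (n - g) * (g / 2 + 1))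
      ≤ ((g+1) * ((g+1) / 2) + (if Even (g+1) then 1 else 2) + (n - (g+1)) * ((g+1) / 2 + 1)) ∧
    ((g * (g / 2) + (if Even g then 1 else 2) + (n - g) * (g / 2 + 1))
      = ((g+1) * ((g+1) / 2) + (if Even (g+1) then 1 else 2) + (n - (g+1)) * ((g+1) / 2 + 1))
      ↔ Even g) := by
  rcases Nat.even_or_odd g with ⟨h, hh⟩ | ⟨h, hh⟩
  · subst hh
    have h2 : 2 ≤ h := by omega
    rw [if_pos ⟨h, rfl⟩, if_neg (by rw [Nat.even_iff]; omega)]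
    rw [show (h+h)/2 = h by omega, show (h+h+1)/2 = h by omega]
    have key : (h+h) * h + 1 + (n - (h+h)) * (h + 1)
        = (h+h+1) * h + 2 + (n - (h+h+1)) * (h+1) := by
      zify [show h+h ≤ n by omega, show h+h+1 ≤ n by omega]
      ring
    exact ⟨by omega, fun _ => ⟨h, rfl⟩, fun _ => by omega⟩
  · subst hh
    have h1 : 1 ≤ h := by omega
    rw [if_neg (by rw [Nat.even_iff]; omega), if_pos (by rw [Nat.even_iff]; omega)]
    rw [show (2*h+1)/2 = h by omega, show (2*h+1+1)/2 = h+1 by omega]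
    have key : (2*h+1) * h + 2 + (n - (2*h+1)) * (h + 1) + (n - 2)
        = (2*h+1+1) * (h+1) + 1 + (n - (2*h+1+1)) * (h+1+1) := by
      zify [show 2*h+1 ≤ n by omega, show 2*h+1+1 ≤ n by omega, show 2 ≤ n by omega]
      ring
    constructor
    · omega
    · constructor
      · intro hcon; omega
      · intro hcon
        exfalso
        rw [Nat.even_iff] at hcon
        omega


-- STATEMENT 17
theorem stmt17 (m1 m2 n : ℕ) (h2 : 3 ≤ m2) (h12 : m2 ≤ m1) (hn : 5 ≤ n) :
    ((m1 + m2 - 1 = n) →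
      (totalEcc (twoCyclesGlued m1 m2) ≤ totalEcc (UnlGraph n (n - 1)) ∧
       (totalEcc (twoCyclesGlued m1 m2) = totalEcc (UnlGraph n (n - 1)) ↔
         Even m1 ∧ m2 = 3))) ∧
    (∀ g, 3 ≤ g → g ≤ n - 2 →
      (totalEcc (UnpGraph n g) ≤ totalEcc (UnpGraph n (g + 1)) ∧
       (totalEcc (UnpGraph n g) = totalEcc (UnpGraph n (g + 1)) ↔ Even g))) := by
  constructor
  · intro h
    subst h
    rw [totalEcc_tcg m1 m2 h2 h12, totalEcc_Unl (m1 + m2 - 1) hn]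
    exact final1 m1 m2 h2 h12 hn
  · intro g hg hgn
    rw [totalEcc_Unp n g hg (by omega), totalEcc_Unp n (g + 1) (by omega) (by omega)]
    exact final2 n g hn hg hgn
end

section
/- Let n ≥ 5 and let G be a connected graph on n vertices with exactly one cut vertex. Then ε(G) ≤ ε(U_{n,n−1}^l), where ε(U_{n,n−1}^l) = n(n−2)/2 + 3 if n is even and ε(U_{n,n−1}^l) = n(n−1)/2 + 2 if n is odd. -/
open SimpleGraph

section AuxAll
open SimpleGraph
set_option linter.unusedSectionVars false
attribute [local instance] Classical.propDecidable

variable {V : Type*} [Fintype V] {G : SimpleGraph V}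

lemma ecc_eq_sup [Nonempty V] (v : V) : ecc G v = Finset.univ.sup (G.dist v) := by
  apply le_antisymm
  · exact ciSup_le fun u => Finset.le_sup (Finset.mem_univ u)
  · exact Finset.sup_le fun u _ => le_ciSup (Set.Finite.bddAbove (Set.finite_range _)) u

lemma dist_le_ecc [Nonempty V] (v u : V) : G.dist v u ≤ ecc G v := by
  rw [ecc_eq_sup]; exact Finset.le_sup (Finset.mem_univ u)

lemma exists_ecc [Nonempty V] (v : V) : ∃ u, G.dist v u = ecc G v := by
  rw [ecc_eq_sup]
  obtain ⟨u, -, hu⟩ := Finset.exists_mem_eq_sup Finset.univ Finset.univ_nonempty (G.dist v)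
  exact ⟨u, hu.symm⟩

lemma dist_adj_le (hG : G.Connected) {a c : V} (h : G.Adj a c) (v : V) :
    G.dist v a ≤ G.dist v c + 1 := by
  have := hG.dist_triangle (u := v) (v := c) (w := a)
  rwa [(SimpleGraph.dist_eq_one_iff_adj.2 h.symm : G.dist c a = 1)] at this

lemma walk_ivt (hG : G.Connected) (v : V) {a b : V} (p : G.Walk a b) (s : ℕ)
    (hb : G.dist v b ≤ s) (ha : s ≤ G.dist v a) :
    ∃ u ∈ p.support, G.dist v u = s := by
  revert ha hb
  induction p with
  | nil => intro hb ha; exact ⟨_, by simp, le_antisymm hb ha⟩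
  | @cons a c b h p ih =>
    intro hb ha
    by_cases hc : s ≤ G.dist v c
    · obtain ⟨u, hu, hu2⟩ := ih hb hc
      exact ⟨u, by simp [hu], hu2⟩
    · push_neg at hc
      have h2 := dist_adj_le hG h v
      exact ⟨a, by simp, by omega⟩

lemma walk_trunc {z w : V} (hz : z ≠ w) (p : G.Walk z w) :
    ∃ (y : V) (q : G.Walk z y), G.Adj y w ∧ w ∉ q.support ∧ q.support ⊆ p.support := by
  revert hz
  induction p with
  | nil => intro hz; exact absurd rfl hz
  | @cons a c b h p ih =>
    intro hz
    by_cases hc : c = b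
    · subst hc
      exact ⟨a, Walk.nil, h, by simpa using Ne.symm hz, by simp⟩
    · obtain ⟨y, q, hadj, hw, hsub⟩ := ih hc
      refine ⟨y, Walk.cons h q, hadj, ?_, ?_⟩
      · simp only [Walk.support_cons, List.mem_cons]
        rintro (h' | h')
        exacts [hz h'.symm, hw h']
      · intro u hu
        simp only [Walk.support_cons, List.mem_cons] at hu ⊢
        exact hu.imp id (fun h' => hsub h')

/-- reachability avoiding `w` -/
def Reach (G : SimpleGraph V) (w x y : V) : Prop := ∃ p : G.Walk x y, w ∉ p.support

lemma Reach.ne_left {w x y : V} (h : Reach G w x y) : x ≠ w := by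
  obtain ⟨p, hp⟩ := h; exact fun he => hp (he ▸ p.start_mem_support)

lemma Reach.ne_right {w x y : V} (h : Reach G w x y) : y ≠ w := by
  obtain ⟨p, hp⟩ := h; exact fun he => hp (he ▸ p.end_mem_support)

lemma reach_refl {w x : V} (hx : x ≠ w) : Reach G w x x :=
  ⟨Walk.nil, by simpa using Ne.symm hx⟩

lemma Reach.symm {w x y : V} (h : Reach G w x y) : Reach G w y x := by
  obtain ⟨p, hp⟩ := h; exact ⟨p.reverse, by simpa using hp⟩

lemma Reach.trans {w x y z : V} (h : Reach G w x y) (h' : Reach G w y z) : Reach G w x z := by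
  obtain ⟨p, hp⟩ := h; obtain ⟨q, hq⟩ := h'
  refine ⟨p.append q, ?_⟩
  rw [Walk.mem_support_append_iff]; rintro (h | h) <;> [exact hp h; exact hq h]

lemma reach_of_mem_support {w x y u : V} (p : G.Walk x y) (hp : w ∉ p.support)
    (hu : u ∈ p.support) : Reach G w x u := by
  classical
  exact ⟨p.takeUntil u hu, fun hc => hp (p.support_takeUntil_subset hu hc)⟩

lemma not_reach_dist (hG : G.Connected) {w x u : V} (h : ¬ Reach G w x u) :
    G.dist x u = G.dist x w + G.dist w u := by
  classical
  refine le_antisymm (hG.dist_triangle) ?_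
  obtain ⟨p, hp⟩ := (hG x u).exists_walk_length_eq_dist
  have hw : w ∈ p.support := by
    by_contra hc; exact h ⟨p, hc⟩
  calc G.dist x w + G.dist w u ≤ (p.takeUntil w hw).length + (p.dropUntil w hw).length :=
        Nat.add_le_add (SimpleGraph.dist_le _) (SimpleGraph.dist_le _)
    _ = p.length := by rw [← Walk.length_append, p.take_spec hw]
    _ = G.dist x u := hp


lemma reach_to_induce {w a b : V} (ha : a ≠ w) (hb : b ≠ w) (h : Reach G w a b) :
    (G.induce {v | v ≠ w}).Reachable ⟨a, ha⟩ ⟨b, hb⟩ := by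
  obtain ⟨p, hp⟩ := h
  revert ha hp
  induction p with
  | nil => intro ha hp; rfl
  | @cons a c b h p ih =>
    intro ha hp
    have hc : c ≠ w := fun he => hp (by simp [← he])
    have h1 : (G.induce {v | v ≠ w}).Adj ⟨a, ha⟩ ⟨c, hc⟩ := h
    exact (h1.reachable).trans (ih hb hc (fun hc' => hp (by simp [hc'])))

lemma induce_to_reach {w : V} {a b : {v // v ≠ w}}
    (h : (G.induce {v | v ≠ w}).Reachable a b) : Reach G w a.1 b.1 := by
  obtain ⟨p⟩ := h
  refine ⟨p.map (Embedding.induce {v | v ≠ w}).toHom, ?_⟩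
  intro hc
  have h' : w ∈ (p.map (Embedding.induce {v | v ≠ w}).toHom).support := hc
  rw [Walk.support_map] at h'
  simp only [List.mem_map] at h'
  obtain ⟨⟨u, hu⟩, -, h2⟩ := h'
  exact hu h2

lemma cut_of_sep {y z x : V} (hz : z ≠ y) (hx : x ≠ y) (h : ¬ Reach G y z x) :
    IsCutVertex G y := by
  intro hconn
  exact h (induce_to_reach (a := ⟨z, hz⟩) (b := ⟨x, hx⟩) (hconn.preconnected _ _))

lemma sep_of_cut {w : V} (h : IsCutVertex G w) (hne : ∃ v : V, v ≠ w) :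
    ∃ a b : V, a ≠ w ∧ b ≠ w ∧ ¬ Reach G w a b := by
  rw [IsCutVertex, SimpleGraph.connected_iff] at h
  obtain ⟨v, hv⟩ := hne
  have hne' : Nonempty {v_1 : V | v_1 ≠ w} := ⟨⟨v, hv⟩⟩
  have h' : ¬ (G.induce {v | v ≠ w}).Preconnected := fun hp => h ⟨hp, hne'⟩
  simp only [SimpleGraph.Preconnected] at h'
  push_neg at h'
  obtain ⟨a, b, hab⟩ := h'
  exact ⟨a.1, b.1, a.2, b.2, fun hr => hab (reach_to_induce a.2 b.2 hr)⟩


noncomputable def layer (G : SimpleGraph V) (v : V) (t : ℕ) : Finset V :=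
  Finset.univ.filter (fun u => G.dist v u = t)

noncomputable def cls (G : SimpleGraph V) (w x : V) : Finset V :=
  Finset.univ.filter (fun u => Reach G w x u)

noncomputable def depth (G : SimpleGraph V) (w x : V) : ℕ :=
  (cls G w x).sup (fun u => G.dist w u)

lemma mem_layer {v u : V} {t : ℕ} : u ∈ layer G v t ↔ G.dist v u = t := by
  simp [layer]

lemma mem_cls {w x u : V} : u ∈ cls G w x ↔ Reach G w x u := by simp [cls]

lemma x_mem_cls {w x : V} (hx : x ≠ w) : x ∈ cls G w x := mem_cls.2 (reach_refl hx)

lemma cls_eq {w x y : V} (h : Reach G w x y) : cls G w x = cls G w y := by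
  ext u; simp only [mem_cls]
  exact ⟨fun h' => h.symm.trans h', fun h' => h.trans h'⟩

lemma cls_disjoint {w x y : V} (h : ¬ Reach G w x y) :
    Disjoint (cls G w x) (cls G w y) := by
  rw [Finset.disjoint_left]
  intro u hx hy
  exact h ((mem_cls.1 hx).trans (mem_cls.1 hy).symm)

lemma w_not_mem_cls {w x : V} : w ∉ cls G w x := fun h => (mem_cls.1 h).ne_right rfl

lemma t_le_depth {w x u : V} (h : u ∈ cls G w x) : G.dist w u ≤ depth G w x :=
  Finset.le_sup h

lemma layer_nonempty [Nonempty V] (hG : G.Connected) (v : V) {t : ℕ} (ht : t ≤ ecc G v) :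
    (layer G v t).Nonempty := by
  obtain ⟨f, hf⟩ := exists_ecc (G := G) v
  obtain ⟨p, -⟩ := (hG f v).exists_walk_length_eq_dist
  obtain ⟨u, -, hu⟩ := walk_ivt hG v p t (by rw [SimpleGraph.dist_self]; exact Nat.zero_le _)
    (by rw [hf]; exact ht)
  exact ⟨u, mem_layer.2 hu⟩

section UniqueCut

variable [Nonempty V] (hG : G.Connected) {w : V} (huniq : ∀ y, IsCutVertex G y → y = w)
include hG huniq

lemma singleton_layer_eq_w {v y : V} {t : ℕ} (ht : 0 < t) (hte : t < ecc G v)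
    (hl : layer G v t = {y}) : y = w := by
  obtain ⟨f, hf⟩ := exists_ecc (G := G) v
  refine huniq y (cut_of_sep (z := v) (x := f) ?_ ?_ ?_)
  · intro he
    have : v ∈ layer G v t := by rw [hl, Finset.mem_singleton]; exact he
    rw [mem_layer, SimpleGraph.dist_self] at this; omega
  · intro he
    have : f ∈ layer G v t := by rw [hl, Finset.mem_singleton]; exact he
    rw [mem_layer] at this; omega
  · rintro ⟨p, hp⟩
    obtain ⟨u, hu, hu2⟩ := walk_ivt hG v p.reverse t
      (by rw [SimpleGraph.dist_self]; exact Nat.zero_le _) (by rw [hf]; omega)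
    rw [Walk.support_reverse, List.mem_reverse] at hu
    have : u ∈ layer G v t := mem_layer.2 hu2
    rw [hl, Finset.mem_singleton] at this
    exact hp (this ▸ hu)

lemma two_le_middle_layer {v : V} {t : ℕ} (ht : 0 < t) (hte : t < ecc G v)
    (hweird : G.dist v w ≠ t) : 2 ≤ (layer G v t).card := by
  have hne := layer_nonempty hG v (le_of_lt hte)
  rcases Nat.lt_or_ge (layer G v t).card 2 with h | h
  · interval_cases h' : (layer G v t).card
    · exact absurd (Finset.card_eq_zero.1 h') (Finset.nonempty_iff_ne_empty.1 hne)
    · obtain ⟨y, hy⟩ := Finset.card_eq_one.1 h'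
      have hyw := singleton_layer_eq_w hG huniq ht hte hy
      have : w ∈ layer G v t := by rw [hy, Finset.mem_singleton]; exact hyw.symm
      rw [mem_layer] at this
      exact absurd this hweird
  · exact h

omit huniq in
lemma sum_card_layers (v : V) :
    ∑ t ∈ Finset.range (ecc G v + 1), (layer G v t).card = Fintype.card V := by
  rw [← Finset.card_univ]
  rw [Finset.card_eq_sum_card_fiberwise (f := G.dist v) (t := Finset.range (ecc G v + 1))
    (fun u _ => Finset.mem_range.2 (Nat.lt_succ_of_le (dist_le_ecc v u)))]
  rfl

lemma ecc_upper (v : V) : 2 * ecc G v ≤ Fintype.card V + 1 := by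
  set e := ecc G v with he
  have key : ∀ t ∈ Finset.range (e + 1),
      2 ≤ (layer G v t).card + (if t = 0 then 1 else 0) + (if t = e then 1 else 0)
        + (if t = G.dist v w then 1 else 0) := by
    intro t htr
    rw [Finset.mem_range] at htr
    by_cases h0 : t = 0
    · subst h0
      have : v ∈ layer G v 0 := mem_layer.2 (by rw [SimpleGraph.dist_self])
      have hc := Finset.card_pos.2 ⟨v, this⟩
      have : (if (0:ℕ) = 0 then 1 else 0) = 1 := if_pos rfl
      omega
    by_cases h1 : t = e
    · subst h1
      have hc := Finset.card_pos.2 (layer_nonempty hG v (t := e) (by omega))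
      have : (if e = e then 1 else 0) = 1 := if_pos rfl
      omega
    by_cases h2 : t = G.dist v w
    · subst h2
      have hc := Finset.card_pos.2 (layer_nonempty hG v (t := G.dist v w) (by omega))
      have : (if G.dist v w = G.dist v w then 1 else 0) = 1 := if_pos rfl
      omega
    · have := two_le_middle_layer hG huniq (v := v) (t := t) (by omega) (by omega)
        (fun hc => h2 hc.symm)
      omega
  have hsum := Finset.sum_le_sum key
  rw [Finset.sum_add_distrib, Finset.sum_add_distrib, Finset.sum_add_distrib,
    sum_card_layers hG, Finset.sum_const, Finset.card_range, smul_eq_mul] at hsum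
  have i1 : ∑ t ∈ Finset.range (e + 1), (if t = 0 then 1 else 0) ≤ 1 := by
    rw [Finset.sum_ite_eq' (Finset.range (e+1)) 0 (fun _ => 1)]; split <;> omega
  have i2 : ∑ t ∈ Finset.range (e + 1), (if t = e then 1 else 0) ≤ 1 := by
    rw [Finset.sum_ite_eq' (Finset.range (e+1)) e (fun _ => 1)]; split <;> omega
  have i3 : ∑ t ∈ Finset.range (e + 1), (if t = G.dist v w then 1 else 0) ≤ 1 := by
    rw [Finset.sum_ite_eq' (Finset.range (e+1)) (G.dist v w) (fun _ => 1)]; split <;> omega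
  omega

noncomputable def clayer (G : SimpleGraph V) (w x : V) (s : ℕ) : Finset V :=
  (cls G w x).filter (fun u => G.dist w u = s)

omit hG huniq in
lemma mem_clayer {x u : V} {s : ℕ} :
    u ∈ clayer G w x s ↔ u ∈ cls G w x ∧ G.dist w u = s := by simp [clayer]

omit huniq in
lemma one_le_dist_of_mem_cls {x u : V} (h : u ∈ cls G w x) : 1 ≤ G.dist w u := by
  have hne : u ≠ w := (mem_cls.1 h).ne_right
  exact (hG.pos_dist_of_ne (fun he => hne he.symm))

omit huniq in
lemma clayer_nonempty {x : V} (hx : x ≠ w) {s : ℕ} (hs : 1 ≤ s) (hsd : s ≤ depth G w x) :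
    (clayer G w x s).Nonempty := by
  have hclsne : (cls G w x).Nonempty := ⟨x, x_mem_cls hx⟩
  obtain ⟨z, hz, hzd⟩ := Finset.exists_mem_eq_sup _ hclsne (fun u => G.dist w u)
  have hzw : z ≠ w := (mem_cls.1 hz).ne_right
  obtain ⟨p, -⟩ := (hG z w).exists_walk_length_eq_dist
  obtain ⟨y, q, hadj, hwq, -⟩ := walk_trunc hzw p
  have hdy : G.dist w y ≤ 1 := SimpleGraph.dist_le (Walk.cons hadj.symm Walk.nil)
  have hzd' : depth G w x = G.dist w z := hzd
  obtain ⟨u, hu, hu2⟩ := walk_ivt hG w q s (le_trans hdy hs) (by omega)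
  refine ⟨u, mem_clayer.2 ⟨?_, hu2⟩⟩
  have : Reach G w z u := reach_of_mem_support q hwq hu
  exact mem_cls.2 (((mem_cls.1 hz).symm.trans (mem_cls.1 (x_mem_cls hx))).symm.trans this)

lemma clayer_two {x : V} (hx : x ≠ w) {s : ℕ} (hs : 1 ≤ s) (hsd : s < depth G w x) :
    2 ≤ (clayer G w x s).card := by
  have hne := clayer_nonempty hG hx hs (le_of_lt hsd)
  rcases Nat.lt_or_ge (clayer G w x s).card 2 with h | h
  swap; · exact h
  interval_cases h' : (clayer G w x s).card
  · exact absurd (Finset.card_eq_zero.1 h') (Finset.nonempty_iff_ne_empty.1 hne)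
  obtain ⟨y, hy⟩ := Finset.card_eq_one.1 h'
  exfalso
  have hymem : y ∈ clayer G w x s := hy ▸ Finset.mem_singleton_self y
  rw [mem_clayer] at hymem
  obtain ⟨hycls, hyd⟩ := hymem
  -- the deepest vertex z
  have hclsne : (cls G w x).Nonempty := ⟨x, x_mem_cls hx⟩
  obtain ⟨z, hz, hzd⟩ := Finset.exists_mem_eq_sup _ hclsne (fun u => G.dist w u)
  have hzw : z ≠ w := (mem_cls.1 hz).ne_right
  have hzd' : depth G w x = G.dist w z := hzd
  have hzy : z ≠ y := fun he => by rw [← he] at hyd; omega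
  have hwy : w ≠ y := fun he => by rw [← he, SimpleGraph.dist_self] at hyd; omega
  have hcut : IsCutVertex G y := by
    refine cut_of_sep hzy hwy ?_
    rintro ⟨p, hp⟩
    obtain ⟨y', q, hadj, hwq, hqsub⟩ := walk_trunc hzw p
    have hdy' : G.dist w y' ≤ 1 := SimpleGraph.dist_le (Walk.cons hadj.symm Walk.nil)
    obtain ⟨u, hu, hu2⟩ := walk_ivt hG w q s (le_trans hdy' hs) (by omega)
    have hucls : u ∈ cls G w x := by
      have : Reach G w z u := reach_of_mem_support q hwq hu
      exact mem_cls.2 (((mem_cls.1 hz).symm.trans (mem_cls.1 (x_mem_cls hx))).symm.trans this)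
    have : u ∈ clayer G w x s := mem_clayer.2 ⟨hucls, hu2⟩
    rw [hy, Finset.mem_singleton] at this
    exact hp (this ▸ hqsub hu)
  have := huniq y hcut
  rw [← this] at hwy
  exact hwy rfl

lemma cls_card_lower (x : V) (hx : x ≠ w) :
    2 * depth G w x ≤ (cls G w x).card + 1 ∧
    2 * (depth G w x - 1) ≤ ((cls G w x).filter (fun u => G.dist w u ≠ depth G w x)).card := by
  set N := depth G w x with hN
  have hN1 : 1 ≤ N := le_trans (one_le_dist_of_mem_cls hG (x_mem_cls hx))
    (t_le_depth (x_mem_cls hx))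
  have hmem : ∀ u ∈ cls G w x, G.dist w u ∈ Finset.Icc 1 N := fun u hu =>
    Finset.mem_Icc.2 ⟨one_le_dist_of_mem_cls hG hu, t_le_depth hu⟩
  constructor
  · have hcard : (cls G w x).card = ∑ s ∈ Finset.Icc 1 N, (clayer G w x s).card :=
      Finset.card_eq_sum_card_fiberwise hmem
    have key : ∀ s ∈ Finset.Icc 1 N, 2 ≤ (clayer G w x s).card + (if s = N then 1 else 0) := by
      intro s hsr
      rw [Finset.mem_Icc] at hsr
      by_cases hsN : s = N
      · have hc := Finset.card_pos.2 (clayer_nonempty hG hx hsr.1 hsr.2)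
        have : (if s = N then 1 else 0) = 1 := if_pos hsN
        omega
      · have := clayer_two hG huniq hx hsr.1 (lt_of_le_of_ne hsr.2 hsN)
        omega
    have hsum := Finset.sum_le_sum key
    rw [Finset.sum_add_distrib, Finset.sum_const, Nat.card_Icc] at hsum
    have i1 : ∑ s ∈ Finset.Icc 1 N, (if s = N then 1 else 0) ≤ 1 := by
      rw [Finset.sum_ite_eq' (Finset.Icc 1 N) N (fun _ => 1)]; split <;> omega
    simp only [smul_eq_mul] at hsum
    omega
  · set F := (cls G w x).filter (fun u => G.dist w u ≠ N) with hF
    have hmem2 : ∀ u ∈ F, G.dist w u ∈ Finset.Icc 1 (N - 1) := by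
      intro u hu
      rw [hF, Finset.mem_filter] at hu
      have := hmem u hu.1
      rw [Finset.mem_Icc] at this ⊢
      have := hu.2
      omega
    have hcard : F.card = ∑ s ∈ Finset.Icc 1 (N-1), (F.filter (fun u => G.dist w u = s)).card :=
      Finset.card_eq_sum_card_fiberwise hmem2
    have key : ∀ s ∈ Finset.Icc 1 (N-1), 2 ≤ (F.filter (fun u => G.dist w u = s)).card := by
      intro s hsr
      rw [Finset.mem_Icc] at hsr
      have heq : F.filter (fun u => G.dist w u = s) = clayer G w x s := by
        rw [hF, Finset.filter_filter]
        apply Finset.filter_congr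
        intro u _
        constructor
        · rintro ⟨-, h2⟩; exact h2
        · intro h2; exact ⟨by omega, h2⟩
      rw [heq]
      exact clayer_two hG huniq hx hsr.1 (by omega)
    have hsum := Finset.sum_le_sum key
    rw [Finset.sum_const, Nat.card_Icc] at hsum
    simp only [smul_eq_mul] at hsum
    omega


omit hG huniq in
lemma all_eq_of_sum_eq {s : Finset ℕ} {f : ℕ → ℕ} {c : ℕ} (h2 : ∀ i ∈ s, c ≤ f i)
    (hs : ∑ i ∈ s, f i = c * s.card) : ∀ i ∈ s, f i = c := by
  intro i hi
  have h1 := Finset.add_sum_erase s f hi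
  have h3 : c * (s.card - 1) ≤ ∑ j ∈ s.erase i, f j := by
    calc c * (s.card - 1) = ∑ _j ∈ s.erase i, c := by
          rw [Finset.sum_const, Finset.card_erase_of_mem hi, smul_eq_mul, Nat.mul_comm]
      _ ≤ _ := Finset.sum_le_sum (fun j hj => h2 j (Finset.mem_erase.1 hj).2)
  have h4 := h2 i hi
  have h5 : 1 ≤ s.card := Finset.card_pos.2 ⟨i, hi⟩
  obtain ⟨k, hk⟩ : ∃ k, s.card = k + 1 := ⟨s.card - 1, by omega⟩
  rw [hk] at hs h3
  simp only [Nat.add_sub_cancel] at h3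
  have hmul : c * (k+1) = c * k + c := by ring
  omega

omit hG huniq in
lemma all_eq_of_sum_eq' {f : V → ℕ} {c : ℕ} (h2 : ∀ i : V, c ≤ f i)
    (hs : ∑ i, f i = c * Fintype.card V) : ∀ i : V, f i = c := by
  intro i
  have h1 := Finset.add_sum_erase Finset.univ f (Finset.mem_univ i)
  have h3 : c * (Fintype.card V - 1) ≤ ∑ j ∈ Finset.univ.erase i, f j := by
    calc c * (Fintype.card V - 1) = ∑ _j ∈ Finset.univ.erase i, c := by
          rw [Finset.sum_const, Finset.card_erase_of_mem (Finset.mem_univ i), smul_eq_mul,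
            Nat.mul_comm, Finset.card_univ]
      _ ≤ _ := Finset.sum_le_sum (fun j _ => h2 j)
  have h4 := h2 i
  have h5 : 1 ≤ Fintype.card V := Fintype.card_pos
  obtain ⟨k, hk⟩ : ∃ k, Fintype.card V = k + 1 := ⟨Fintype.card V - 1, by omega⟩
  rw [hk] at hs h3
  simp only [Nat.add_sub_cancel] at h3
  have hmul : c * (k+1) = c * k + c := by ring
  omega

variable {n : ℕ} (hcut : IsCutVertex G w) (hn : 5 ≤ n) (hcard : Fintype.card V = n)
include hcut hn hcard

omit huniq in
lemma second_class : ∃ a b : V, a ≠ w ∧ b ≠ w ∧ ¬ Reach G w a b :=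
  sep_of_cut hcut (by
    have : 2 ≤ Fintype.card V := by omega
    obtain ⟨v, hv⟩ := Fintype.exists_ne_of_one_lt_card (by omega) w
    exact ⟨v, hv⟩)

lemma ecc_w_upper : 2 * ecc G w + 2 ≤ n + 1 := by
  by_cases h0 : ecc G w = 0
  · omega
  obtain ⟨z, hz⟩ := exists_ecc (G := G) w
  have hzw : z ≠ w := by
    intro he; rw [he, SimpleGraph.dist_self] at hz; omega
  have hz1 : z ∈ cls G w z := x_mem_cls hzw
  have hdep : ecc G w ≤ depth G w z := by
    rw [← hz]; exact t_le_depth hz1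
  have hcls := (cls_card_lower hG huniq z hzw).1
  obtain ⟨a, b, ha, hb, hab⟩ := second_class hG hcut hn hcard
  have hone : ∃ c, c ≠ w ∧ ¬ Reach G w z c := by
    by_cases hra : Reach G w z a
    · exact ⟨b, hb, fun hrb => hab (hra.symm.trans hrb)⟩
    · exact ⟨a, ha, hra⟩
  obtain ⟨c, hc, hzc⟩ := hone
  have hdisj := cls_disjoint (G := G) hzc
  have hsub : cls G w z ∪ cls G w c ⊆ Finset.univ.erase w := by
    intro u hu
    rw [Finset.mem_union] at hu
    rw [Finset.mem_erase]
    rcases hu with h | h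
    · exact ⟨(mem_cls.1 h).ne_right, Finset.mem_univ u⟩
    · exact ⟨(mem_cls.1 h).ne_right, Finset.mem_univ u⟩
  have hcard2 := Finset.card_le_card hsub
  rw [Finset.card_union_of_disjoint hdisj, Finset.card_erase_of_mem (Finset.mem_univ w),
    Finset.card_univ, hcard] at hcard2
  have hcne : 1 ≤ (cls G w c).card := Finset.card_pos.2 ⟨c, x_mem_cls hc⟩
  omega

lemma w_ecc_lt : ecc G w < (n+1)/2 := by
  have := ecc_w_upper hG huniq hcut hn hcard
  omega

lemma typeA_notreach {x : V} (hxw : x ≠ w) (hA : (layer G x (G.dist x w)).card = 1) :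
    ∀ f, G.dist x w < G.dist x f → ¬ Reach G w x f := by
  intro f hf
  have hwmem : w ∈ layer G x (G.dist x w) := mem_layer.2 rfl
  have hlay : layer G x (G.dist x w) = {w} := by
    obtain ⟨y, hy⟩ := Finset.card_eq_one.1 hA
    rw [hy] at hwmem ⊢
    rw [Finset.mem_singleton] at hwmem
    rw [hwmem]
  rintro ⟨p, hp⟩
  obtain ⟨u, hu, hu2⟩ := walk_ivt hG x p.reverse (G.dist x w)
    (by rw [SimpleGraph.dist_self]; exact Nat.zero_le _) (le_of_lt hf)
  rw [Walk.support_reverse, List.mem_reverse] at hu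
  have : u ∈ layer G x (G.dist x w) := mem_layer.2 hu2
  rw [hlay, Finset.mem_singleton] at this
  exact hp (this ▸ hu)

lemma typeB_structure {x : V} (hxw : x ≠ w) (hx : ecc G x = (n+1)/2)
    (hB : 2 ≤ (layer G x (G.dist x w)).card) :
    n = 2 * ((n+1)/2) ∧ ∑ u : V, G.dist x u = ((n+1)/2) * ((n+1)/2) := by
  set E := (n+1)/2 with hE
  have hE3 : 3 ≤ E := by omega
  have h2E : 2 * E ≤ n + 1 := by omega
  have hnE : n ≤ 2 * E := by omega
  -- all middle layers at least 2
  have hmid : ∀ t, 1 ≤ t → t ≤ E - 1 → 2 ≤ (layer G x t).card := by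
    intro t ht1 ht2
    by_cases htx : G.dist x w = t
    · rw [htx] at hB; exact hB
    · exact two_le_middle_layer hG huniq (by omega) (by omega) htx
  have hL0 : (layer G x 0).card = 1 := by
    have h1 : layer G x 0 = {x} := by
      ext u
      rw [mem_layer, Finset.mem_singleton]
      rw [hG.dist_eq_zero_iff]
      exact eq_comm
    rw [h1, Finset.card_singleton]
  have hLE : 1 ≤ (layer G x E).card := Finset.card_pos.2 (layer_nonempty hG x (by omega))
  have hsum := sum_card_layers (G := G) hG x
  rw [hx, hcard] at hsum
  -- n = 2E and each middle layer exactly 2, |L_E| = 1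
  have hsplit : ∑ t ∈ Finset.range (E + 1), (layer G x t).card
      = (∑ i ∈ Finset.range (E-1), (layer G x (i+1)).card) + (layer G x E).card
        + (layer G x 0).card := by
    rw [Finset.sum_range_succ' (fun t => (layer G x t).card) E]
    congr 1
    have hEE : E = (E - 1) + 1 := by omega
    rw [hEE, Finset.sum_range_succ]
    rw [show E - 1 + 1 = E from by omega]
  have hmid2 : ∀ i ∈ Finset.range (E-1), 2 ≤ (layer G x (i+1)).card := by
    intro i hi
    rw [Finset.mem_range] at hi
    exact hmid (i+1) (by omega) (by omega)
  have hmidsum : 2 * (E - 1) ≤ ∑ i ∈ Finset.range (E-1), (layer G x (i+1)).card := by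
    calc 2 * (E-1) = ∑ _i ∈ Finset.range (E-1), 2 := by
          rw [Finset.sum_const, Finset.card_range, smul_eq_mul]; ring
      _ ≤ _ := Finset.sum_le_sum hmid2
  have heq : (∑ i ∈ Finset.range (E-1), (layer G x (i+1)).card) = 2 * (E - 1)
      ∧ (layer G x E).card = 1 ∧ n = 2 * E := by omega
  have hall : ∀ i ∈ Finset.range (E-1), (layer G x (i+1)).card = 2 := by
    apply all_eq_of_sum_eq (c := 2) hmid2
    rw [heq.1, Finset.card_range]
  refine ⟨heq.2.2, ?_⟩
  -- now compute the distance sum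
  have hfib : ∑ u : V, G.dist x u
      = ∑ t ∈ Finset.range (E + 1), ∑ u ∈ Finset.univ.filter (fun u => G.dist x u = t), G.dist x u := by
    rw [Finset.sum_fiberwise_of_maps_to (fun u _ => Finset.mem_range.2 (by
      have := dist_le_ecc (G := G) x u; omega))]
  have hinner : ∀ t ∈ Finset.range (E+1),
      ∑ u ∈ Finset.univ.filter (fun u => G.dist x u = t), G.dist x u = t * (layer G x t).card := by
    intro t _
    rw [show Finset.univ.filter (fun u => G.dist x u = t) = layer G x t from rfl]
    calc ∑ u ∈ layer G x t, G.dist x u = ∑ u ∈ layer G x t, t :=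
          Finset.sum_congr rfl (fun u hu => mem_layer.1 hu)
      _ = t * (layer G x t).card := by rw [Finset.sum_const, smul_eq_mul, Nat.mul_comm]
  rw [hfib, Finset.sum_congr rfl hinner]
  rw [Finset.sum_range_succ' (fun t => t * (layer G x t).card) E]
  have hEE : E = (E - 1) + 1 := by omega
  rw [hEE, Finset.sum_range_succ]
  rw [show (E-1)+1 = E from by omega, heq.2.1]
  have hgauss : ∀ m : ℕ, (∑ i ∈ Finset.range m, (i+1) * 2) = m * (m+1) := by
    intro m
    induction m with
    | zero => simp
    | succ k ih => rw [Finset.sum_range_succ, ih]; ring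
  have hterms : ∑ i ∈ Finset.range (E-1), (i+1) * (layer G x (i+1)).card
      = ∑ i ∈ Finset.range (E-1), (i+1) * 2 :=
    Finset.sum_congr rfl (fun i hi => by rw [hall i hi])
  rw [hterms, hgauss]
  obtain ⟨e', he'⟩ : ∃ e', E = e' + 1 := ⟨E - 1, by omega⟩
  rw [he']
  simp only [Nat.add_sub_cancel]
  ring


lemma S_le_E (v : V) : ecc G v ≤ (n+1)/2 := by
  have := ecc_upper hG huniq v
  omega

lemma cross_far {x : V} (hx : ecc G x = (n+1)/2) :
    ∃ f, G.dist x f = (n+1)/2 ∧ ¬ Reach G w x f := by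
  set E := (n+1)/2 with hE
  have hwE := w_ecc_lt hG huniq hcut hn hcard
  have hxw : x ≠ w := fun he => by rw [he] at hx; omega
  have htx1 : 1 ≤ G.dist x w := hG.pos_dist_of_ne hxw
  have htxE : G.dist x w < E := by
    rw [SimpleGraph.dist_comm]
    exact lt_of_le_of_lt (dist_le_ecc w x) hwE
  obtain ⟨f0, hf0⟩ := exists_ecc (G := G) x
  rw [hx] at hf0
  by_cases hR : Reach G w x f0
  swap
  · exact ⟨f0, hf0, hR⟩
  by_cases hA : (layer G x (G.dist x w)).card ≤ 1
  · have hA1 : (layer G x (G.dist x w)).card = 1 :=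
      le_antisymm hA (Finset.card_pos.2 ⟨w, mem_layer.2 rfl⟩)
    exact ⟨f0, hf0, typeA_notreach hG huniq hcut hn hcard hxw hA1 f0 (by omega)⟩
  push_neg at hA
  exfalso
  have hf0S : ecc G f0 = E := by
    have h1 : E ≤ ecc G f0 := by
      rw [← hf0, SimpleGraph.dist_comm]
      exact dist_le_ecc f0 x
    have h2 := S_le_E hG huniq hcut hn hcard f0
    omega
  have hf0w : f0 ≠ w := fun he => by rw [he] at hf0S; omega
  have htf1 : 1 ≤ G.dist f0 w := hG.pos_dist_of_ne hf0w
  have htfE : G.dist f0 w < E := by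
    rw [SimpleGraph.dist_comm]
    exact lt_of_le_of_lt (dist_le_ecc w f0) hwE
  by_cases hA2 : (layer G f0 (G.dist f0 w)).card ≤ 1
  · have hA1 : (layer G f0 (G.dist f0 w)).card = 1 :=
      le_antisymm hA2 (Finset.card_pos.2 ⟨w, mem_layer.2 rfl⟩)
    have := typeA_notreach hG huniq hcut hn hcard hf0w hA1 x
      (by rw [SimpleGraph.dist_comm (u := f0) (v := x), hf0]; omega)
    exact this hR.symm
  push_neg at hA2
  obtain ⟨hn2E, hsx⟩ := typeB_structure hG huniq hcut hn hcard hxw hx hA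
  obtain ⟨-, hsf⟩ := typeB_structure hG huniq hcut hn hcard hf0w hf0S hA2
  have hsum : ∑ u : V, (G.dist x u + G.dist f0 u) = E * Fintype.card V := by
    rw [Finset.sum_add_distrib, hsx, hsf, hcard]
    have h5 := congrArg (fun m => (n+1)/2 * m) hn2E
    have h6 : (n+1)/2 * (2 * ((n+1)/2)) = (n+1)/2 * ((n+1)/2) + (n+1)/2 * ((n+1)/2) := by ring
    simp only [hE]
    linarith [h5, h6]
  have hlow : ∀ u : V, E ≤ G.dist x u + G.dist f0 u := by
    intro u
    calc E = G.dist x f0 := hf0.symm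
      _ ≤ G.dist x u + G.dist u f0 := hG.dist_triangle
      _ = G.dist x u + G.dist f0 u := by rw [SimpleGraph.dist_comm (u := u) (v := f0)]
  have hall : ∀ u : V, G.dist x u + G.dist f0 u = E :=
    all_eq_of_sum_eq' hlow hsum
  obtain ⟨a, b, ha, hb, hab⟩ := second_class hG hcut hn hcard
  have hu0 : ∃ c, c ≠ w ∧ ¬ Reach G w x c := by
    by_cases hra : Reach G w x a
    · exact ⟨b, hb, fun hrb => hab (hra.symm.trans hrb)⟩
    · exact ⟨a, ha, hra⟩
  obtain ⟨u0, hu0w, hxu0⟩ := hu0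
  have hfu0 : ¬ Reach G w f0 u0 := fun h => hxu0 (hR.trans h)
  have e1 : G.dist x u0 = G.dist x w + G.dist w u0 := not_reach_dist hG hxu0
  have e2 : G.dist f0 u0 = G.dist f0 w + G.dist w u0 := not_reach_dist hG hfu0
  have e3 : E ≤ G.dist x w + G.dist f0 w := by
    calc E = G.dist x f0 := hf0.symm
      _ ≤ G.dist x w + G.dist w f0 := hG.dist_triangle
      _ = G.dist x w + G.dist f0 w := by rw [SimpleGraph.dist_comm (u := w) (v := f0)]
  have e4 := hall u0
  have hu0pos : 1 ≤ G.dist w u0 := hG.pos_dist_of_ne (fun he => hu0w he.symm)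
  omega


omit hG huniq hcut hn hcard in
lemma depth_congr {x y : V} (h : Reach G w x y) : depth G w x = depth G w y := by
  unfold depth; rw [cls_eq h]

lemma at_top_of_max {v : V} (hv : ecc G v = (n+1)/2) :
    G.dist w v = depth G w v ∧ v ≠ w := by
  set E := (n+1)/2 with hE
  have hwE := w_ecc_lt hG huniq hcut hn hcard
  have hvw : v ≠ w := fun he => by rw [he] at hv; omega
  obtain ⟨f, hfd, hfr⟩ := cross_far hG huniq hcut hn hcard hv
  have hfw : f ≠ w := fun he => by
    rw [he] at hfd
    have h1 : G.dist v w ≤ ecc G w := by rw [SimpleGraph.dist_comm]; exact dist_le_ecc w v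
    omega
  have hadd : G.dist v f = G.dist v w + G.dist w f := not_reach_dist hG hfr
  have hdisj := cls_disjoint (G := G) hfr
  have hsub : cls G w v ∪ cls G w f ⊆ Finset.univ.erase w := by
    intro u hu
    rw [Finset.mem_union] at hu
    rw [Finset.mem_erase]
    rcases hu with h | h
    · exact ⟨(mem_cls.1 h).ne_right, Finset.mem_univ u⟩
    · exact ⟨(mem_cls.1 h).ne_right, Finset.mem_univ u⟩
  have hcard2 := Finset.card_le_card hsub
  rw [Finset.card_union_of_disjoint hdisj, Finset.card_erase_of_mem (Finset.mem_univ w),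
    Finset.card_univ, hcard] at hcard2
  have hl1 := (cls_card_lower hG huniq v hvw).1
  have hl2 := (cls_card_lower hG huniq f hfw).1
  have ht1 : G.dist w v ≤ depth G w v := t_le_depth (x_mem_cls hvw)
  have ht2 : G.dist w f ≤ depth G w f := t_le_depth (x_mem_cls hfw)
  have hvwc : G.dist v w = G.dist w v := SimpleGraph.dist_comm
  refine ⟨?_, hvw⟩
  omega


lemma S_bound :
    (Finset.univ.filter (fun v => ecc G v = (n+1)/2)).card + 2 * ((n+1)/2) ≤ n + 3 := by
  set E := (n+1)/2 with hE
  set S := Finset.univ.filter (fun v : V => ecc G v = E) with hS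
  by_cases hSne : S.Nonempty
  swap
  · rw [Finset.not_nonempty_iff_eq_empty] at hSne
    rw [hSne, Finset.card_empty]
    omega
  obtain ⟨x0, hx0⟩ := hSne
  rw [hS, Finset.mem_filter] at hx0
  have hx0E : ecc G x0 = E := hx0.2
  have hwE := w_ecc_lt hG huniq hcut hn hcard
  obtain ⟨f0, hf0d, hf0r⟩ := cross_far hG huniq hcut hn hcard hx0E
  have hf0E : ecc G f0 = E := by
    have h1 : E ≤ ecc G f0 := by
      rw [hE, ← hf0d, SimpleGraph.dist_comm]
      exact dist_le_ecc f0 x0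
    have h2 := S_le_E hG huniq hcut hn hcard f0
    omega
  obtain ⟨htop0, hx0w⟩ := at_top_of_max hG huniq hcut hn hcard hx0E
  obtain ⟨htop1, hf0w⟩ := at_top_of_max hG huniq hcut hn hcard hf0E
  have hadd : G.dist x0 f0 = G.dist x0 w + G.dist w f0 := not_reach_dist hG hf0r
  set N0 := depth G w x0 with hN0
  set N1 := depth G w f0 with hN1
  have hNsum : N0 + N1 = E := by
    have hc : G.dist x0 w = G.dist w x0 := SimpleGraph.dist_comm
    omega
  -- the three disjoint sets
  set A1 := (cls G w x0).filter (fun u => G.dist w u ≠ N0) with hA1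
  set A2 := (cls G w f0).filter (fun u => G.dist w u ≠ N1) with hA2
  have hcard1 := (cls_card_lower hG huniq x0 hx0w).2
  have hcard2 := (cls_card_lower hG huniq f0 hf0w).2
  have hdisj12 : Disjoint A1 A2 :=
    Finset.disjoint_of_subset_left (Finset.filter_subset _ _)
      (Finset.disjoint_of_subset_right (Finset.filter_subset _ _) (cls_disjoint hf0r))
  have hdisjS1 : Disjoint S A1 := by
    rw [Finset.disjoint_left]
    intro v hv hv1
    rw [hS, Finset.mem_filter] at hv
    rw [hA1, Finset.mem_filter] at hv1
    obtain ⟨hvc, hvne⟩ := hv1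
    have := (at_top_of_max hG huniq hcut hn hcard hv.2).1
    exact hvne (by rw [this, depth_congr (Reach.symm (mem_cls.1 hvc))])
  have hdisjS2 : Disjoint S A2 := by
    rw [Finset.disjoint_left]
    intro v hv hv2
    rw [hS, Finset.mem_filter] at hv
    rw [hA2, Finset.mem_filter] at hv2
    obtain ⟨hvc, hvne⟩ := hv2
    have := (at_top_of_max hG huniq hcut hn hcard hv.2).1
    exact hvne (by rw [this, depth_congr (Reach.symm (mem_cls.1 hvc))])
  have hsub : S ∪ (A1 ∪ A2) ⊆ Finset.univ.erase w := by
    intro u hu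
    rw [Finset.mem_union, Finset.mem_union] at hu
    rw [Finset.mem_erase]
    refine ⟨?_, Finset.mem_univ u⟩
    rcases hu with h | h | h
    · rw [hS, Finset.mem_filter] at h
      exact fun he => by rw [he] at h; omega
    · rw [hA1, Finset.mem_filter] at h
      exact (mem_cls.1 h.1).ne_right
    · rw [hA2, Finset.mem_filter] at h
      exact (mem_cls.1 h.1).ne_right
  have hctot := Finset.card_le_card hsub
  rw [Finset.card_union_of_disjoint (Finset.disjoint_union_right.2 ⟨hdisjS1, hdisjS2⟩),
    Finset.card_union_of_disjoint hdisj12, Finset.card_erase_of_mem (Finset.mem_univ w),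
    Finset.card_univ, hcard] at hctot
  have hcard1' : 2 * (N0 - 1) ≤ A1.card := by rw [hA1, hN0]; exact hcard1
  have hcard2' : 2 * (N1 - 1) ≤ A2.card := by rw [hA2, hN1]; exact hcard2
  have hN0pos : 1 ≤ N0 := le_trans (one_le_dist_of_mem_cls hG (x_mem_cls hx0w))
    (t_le_depth (x_mem_cls hx0w))
  have hN1pos : 1 ≤ N1 := le_trans (one_le_dist_of_mem_cls hG (x_mem_cls hf0w))
    (t_le_depth (x_mem_cls hf0w))
  omega

lemma partII_bound : totalEcc G ≤ (n+1)/2 * (n-2) + 3 := by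
  set E := (n+1)/2 with hE
  have hE3 : 3 ≤ E := by omega
  have hpt : ∀ v : V, ecc G v ≤ (E - 1) + (if ecc G v = E then 1 else 0) := by
    intro v
    have h1 := S_le_E hG huniq hcut hn hcard v
    by_cases h : ecc G v = E
    · rw [if_pos h]; omega
    · rw [if_neg h]; omega
  have htot : totalEcc G ≤ Fintype.card V * (E - 1)
      + (Finset.univ.filter (fun v : V => ecc G v = E)).card := by
    rw [totalEcc, Finset.card_filter]
    calc ∑ v : V, ecc G v ≤ ∑ v : V, ((E - 1) + (if ecc G v = E then 1 else 0)) :=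
          Finset.sum_le_sum (fun v _ => hpt v)
      _ = Fintype.card V * (E - 1) + ∑ v : V, (if ecc G v = E then 1 else 0) := by
          rw [Finset.sum_add_distrib, Finset.sum_const, smul_eq_mul, Finset.card_univ]
  have hsb := S_bound hG huniq hcut hn hcard
  rw [hcard] at htot
  have hcS : (Finset.univ.filter (fun v : V => ecc G v = E)).card + 2 * E ≤ n + 3 := hsb
  have hgoal : n * (E - 1) + (n + 3 - 2 * E) ≤ E * (n - 2) + 3 := by
    have h2E : 2 * E ≤ n + 1 := by omega
    zify [hE3, h2E, (by omega : 1 ≤ E), (by omega : 2 ≤ n), (by omega : 2 * E ≤ n + 3)]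
    nlinarith
  omega

end UniqueCut


end AuxAll

section AuxP1
open SimpleGraph
set_option linter.unusedSectionVars false

/-- cyclic distance -/
def cdi (m a b : ℕ) : ℕ := min ((a-b)+(b-a)) (m - ((a-b)+(b-a)))

/-- the distance function on `U_{n,n-1}` -/
def DU (n : ℕ) : (Fin (n - (n-1)) ⊕ Fin (n-1)) → (Fin (n - (n-1)) ⊕ Fin (n-1)) → ℕ
  | .inl _, .inl _ => 0
  | .inl _, .inr j => 1 + cdi (n-1) 0 j.val
  | .inr j, .inl _ => 1 + cdi (n-1) 0 j.val
  | .inr i, .inr j => cdi (n-1) i.val j.val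

section DistEq

variable {V : Type*} (G : SimpleGraph V) (D : V → V → ℕ)

lemma walk_of_D (hzero : ∀ v u, D v u = 0 → v = u)
    (hdesc : ∀ v u, 0 < D v u → ∃ u', G.Adj u' u ∧ D v u' + 1 = D v u) :
    ∀ (k : ℕ) (v u : V), D v u ≤ k → ∃ p : G.Walk v u, p.length ≤ k := by
  intro k
  induction k with
  | zero =>
    intro v u h
    obtain rfl := hzero v u (Nat.le_zero.1 h)
    exact ⟨Walk.nil, by simp⟩
  | succ k ih =>
    intro v u h
    by_cases h0 : D v u = 0
    · obtain rfl := hzero v u h0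
      exact ⟨Walk.nil, by simp⟩
    · obtain ⟨u', hadj, hd⟩ := hdesc v u (by omega)
      obtain ⟨p', hp'⟩ := ih v u' (by omega)
      exact ⟨p'.concat hadj, by rw [Walk.length_concat]; omega⟩

lemma D_le_walk (hsymm : ∀ v u, D v u = D u v) (hrefl : ∀ v, D v v = 0)
    (hlip : ∀ (u : V) {a b : V}, G.Adj a b → D u a ≤ D u b + 1) :
    ∀ {v u : V} (p : G.Walk v u), D v u ≤ p.length := by
  intro v u p
  induction p with
  | nil => rw [hrefl]; exact Nat.zero_le _
  | @cons a c b h p ih =>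
    have : D a b ≤ D c b + 1 := by
      rw [hsymm a b, hsymm c b]
      exact hlip b h
    rw [Walk.length_cons]
    omega

lemma dist_eq_D (hzero : ∀ v u, D v u = 0 → v = u) (hrefl : ∀ v, D v v = 0)
    (hsymm : ∀ v u, D v u = D u v)
    (hlip : ∀ (u : V) {a b : V}, G.Adj a b → D u a ≤ D u b + 1)
    (hdesc : ∀ v u, 0 < D v u → ∃ u', G.Adj u' u ∧ D v u' + 1 = D v u) :
    ∀ v u, G.dist v u = D v u := by
  intro v u
  obtain ⟨p, hp⟩ := walk_of_D G D hzero hdesc (D v u) v u le_rfl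
  refine le_antisymm (le_trans (SimpleGraph.dist_le p) hp) ?_
  obtain ⟨p0, hp0⟩ := Reachable.exists_walk_length_eq_dist ⟨p⟩
  rw [← hp0]
  exact D_le_walk G D hsymm hrefl hlip p0

end DistEq

section Unl

variable {n : ℕ} (hn : 5 ≤ n)

include hn

lemma adj_pend {i : Fin (n - (n-1))} {j : Fin (n-1)} (hj : j.val = 0) :
    (UnlGraph n (n-1)).Adj (.inl i) (.inr j) := by
  rw [UnlGraph, SimpleGraph.fromRel_adj]
  exact ⟨by simp, Or.inl ⟨by omega, hj⟩⟩

lemma adj_cyc {i j : Fin (n-1)} (hij : i.val + 1 = j.val) :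
    (UnlGraph n (n-1)).Adj (.inr i) (.inr j) := by
  rw [UnlGraph, SimpleGraph.fromRel_adj]
  refine ⟨?_, Or.inl (Or.inl hij)⟩
  intro he
  rw [Sum.inr.injEq] at he
  rw [he] at hij
  omega

lemma adj_wrap {i j : Fin (n-1)} (hi : i.val = 0) (hj : j.val + 1 = n - 1) :
    (UnlGraph n (n-1)).Adj (.inr i) (.inr j) := by
  rw [UnlGraph, SimpleGraph.fromRel_adj]
  refine ⟨?_, Or.inl (Or.inr ⟨hi, hj⟩)⟩
  intro he
  rw [Sum.inr.injEq] at he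
  rw [he] at hi
  omega

end Unl

section Unl2

variable {n : ℕ} (hn : 5 ≤ n)
include hn

lemma unl_lip (u a b : Fin (n-(n-1)) ⊕ Fin (n-1)) (h : (UnlGraph n (n-1)).Adj a b) :
    DU n u a ≤ DU n u b + 1 := by
  rw [UnlGraph, SimpleGraph.fromRel_adj] at h
  obtain ⟨-, hr⟩ := h
  rcases a with ai | aj <;> rcases b with bi | bj
  · rcases u with ui | uj <;> simp only [DU, cdi] <;> omega
  · -- a = inl, b = inr
    have hb : bj.val = 0 := by
      rcases hr with ⟨-, h⟩ | h
      · exact h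
      · exact h.elim
    have h1 := bj.isLt
    rcases u with ui | uj
    · simp only [DU, cdi]; omega
    · have h2 := uj.isLt
      simp only [DU, cdi]; omega
  · -- a = inr, b = inl
    have ha : aj.val = 0 := by
      rcases hr with h | ⟨-, h⟩
      · exact h.elim
      · exact h
    have h1 := aj.isLt
    rcases u with ui | uj
    · simp only [DU, cdi]; omega
    · have h2 := uj.isLt
      simp only [DU, cdi]; omega
  · -- a = inr, b = inr
    have h1 := aj.isLt
    have h2 := bj.isLt
    rcases u with ui | uj
    · simp only [DU, cdi]
      rcases hr with h | h <;> rcases h with h | h <;> omega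
    · have h3 := uj.isLt
      simp only [DU, cdi]
      rcases hr with h | h <;> rcases h with h | h <;> omega

lemma unl_zero (v u : Fin (n-(n-1)) ⊕ Fin (n-1)) (h : DU n v u = 0) : v = u := by
  rcases v with vi | vj <;> rcases u with ui | uj
  · have h1 := vi.isLt
    have h2 := ui.isLt
    have : vi = ui := by
      apply Fin.ext
      omega
    rw [this]
  · simp only [DU] at h; omega
  · simp only [DU] at h; omega
  · have h1 := vj.isLt
    have h2 := uj.isLt
    simp only [DU, cdi] at h
    have : vj = uj := by
      apply Fin.ext
      omega
    rw [this]

omit hn in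
lemma unl_refl (v : Fin (n-(n-1)) ⊕ Fin (n-1)) : DU n v v = 0 := by
  rcases v with vi | vj <;> simp [DU, cdi]

omit hn in
lemma unl_symm (v u : Fin (n-(n-1)) ⊕ Fin (n-1)) : DU n v u = DU n u v := by
  rcases v with vi | vj <;> rcases u with ui | uj <;> simp only [DU, cdi]
  · have h1 := vj.isLt
    have h2 := uj.isLt
    omega

end Unl2

section Unl3

variable {n : ℕ} (hn : 5 ≤ n)
include hn

lemma unl_desc (v u : Fin (n-(n-1)) ⊕ Fin (n-1)) (h : 0 < DU n v u) :
    ∃ u', (UnlGraph n (n-1)).Adj u' u ∧ DU n v u' + 1 = DU n v u := by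
  have hm : 4 ≤ n - 1 := by omega
  rcases v with vi | vj <;> rcases u with ui | uj
  · simp only [DU] at h; omega
  · -- v = inl, u = inr uj
    have hj := uj.isLt
    by_cases h0 : uj.val = 0
    · exact ⟨.inl vi, adj_pend hn h0, by simp only [DU, cdi]; omega⟩
    by_cases hside : uj.val ≤ (n-1) - uj.val
    · refine ⟨.inr ⟨uj.val - 1, by omega⟩, adj_cyc hn (show uj.val - 1 + 1 = uj.val by omega), ?_⟩
      simp only [DU, cdi]; omega
    by_cases hend : uj.val = (n-1) - 1
    · refine ⟨.inr ⟨0, by omega⟩, adj_wrap hn rfl (show uj.val + 1 = n - 1 by omega), ?_⟩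
      simp only [DU, cdi]; omega
    · refine ⟨.inr ⟨uj.val + 1, by omega⟩,
        (adj_cyc hn (show uj.val + 1 = uj.val + 1 from rfl)).symm, ?_⟩
      simp only [DU, cdi]; omega
  · -- v = inr vj, u = inl ui
    have hv := vj.isLt
    refine ⟨.inr ⟨0, by omega⟩, (adj_pend hn rfl).symm, ?_⟩
    simp only [DU, cdi]; omega
  · -- v = inr vj, u = inr uj
    have ha := vj.isLt
    have hb := uj.isLt
    have hne : vj.val ≠ uj.val := by
      intro he
      simp only [DU, cdi] at h
      omega
    by_cases hside : (vj.val - uj.val) + (uj.val - vj.val) ≤ (n-1) - ((vj.val - uj.val) + (uj.val - vj.val))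
    · by_cases hab : vj.val < uj.val
      · refine ⟨.inr ⟨uj.val - 1, by omega⟩,
          adj_cyc hn (show uj.val - 1 + 1 = uj.val by omega), ?_⟩
        simp only [DU, cdi]; omega
      · refine ⟨.inr ⟨uj.val + 1, by omega⟩,
          (adj_cyc hn (show uj.val + 1 = uj.val + 1 from rfl)).symm, ?_⟩
        simp only [DU, cdi]; omega
    · by_cases hab : vj.val < uj.val
      · by_cases hend : uj.val = (n-1) - 1
        · refine ⟨.inr ⟨0, by omega⟩, adj_wrap hn rfl (show uj.val + 1 = n - 1 by omega), ?_⟩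
          simp only [DU, cdi]; omega
        · refine ⟨.inr ⟨uj.val + 1, by omega⟩,
            (adj_cyc hn (show uj.val + 1 = uj.val + 1 from rfl)).symm, ?_⟩
          simp only [DU, cdi]; omega
      · by_cases hend : uj.val = 0
        · refine ⟨.inr ⟨(n-1) - 1, by omega⟩,
            (adj_wrap hn hend (show (n-1) - 1 + 1 = n - 1 by omega)).symm, ?_⟩
          simp only [DU, cdi]; omega
        · refine ⟨.inr ⟨uj.val - 1, by omega⟩,
            adj_cyc hn (show uj.val - 1 + 1 = uj.val by omega), ?_⟩
          simp only [DU, cdi]; omega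

lemma unl_dist (v u : Fin (n-(n-1)) ⊕ Fin (n-1)) :
    (UnlGraph n (n-1)).dist v u = DU n v u :=
  dist_eq_D _ _ (unl_zero hn) (unl_refl) (unl_symm) (fun u' {a b} h => unl_lip hn u' a b h)
    (unl_desc hn) v u

end Unl3

lemma ecc_eq_sup' {V : Type*} [Fintype V] [Nonempty V] (G : SimpleGraph V) (v : V) :
    ecc G v = Finset.univ.sup (G.dist v) := by
  apply le_antisymm
  · exact ciSup_le fun u => Finset.le_sup (Finset.mem_univ u)
  · exact Finset.sup_le fun u _ => le_ciSup (Set.Finite.bddAbove (Set.finite_range _)) u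

lemma dist_le_ecc' {V : Type*} [Fintype V] (G : SimpleGraph V) (v u : V) :
    G.dist v u ≤ ecc G v :=
  le_ciSup (Set.Finite.bddAbove (Set.finite_range _)) u

section Unl4

variable {n : ℕ} (hn : 5 ≤ n)
include hn

lemma unl_ecc_inl (i : Fin (n - (n-1))) :
    ecc (UnlGraph n (n-1)) (.inl i) = (n-1)/2 + 1 := by
  have hi : Nonempty (Fin (n - (n-1)) ⊕ Fin (n-1)) := ⟨.inl i⟩
  apply le_antisymm
  · rw [ecc_eq_sup']
    apply Finset.sup_le
    intro u _
    rw [unl_dist hn]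
    rcases u with ui | uj
    · simp only [DU]; omega
    · have := uj.isLt
      simp only [DU, cdi]; omega
  · have h := dist_le_ecc' (UnlGraph n (n-1)) (.inl i) (.inr ⟨(n-1)/2, by omega⟩)
    rw [unl_dist hn] at h
    simp only [DU, cdi] at h
    omega

lemma unl_ecc_inr (j : Fin (n-1)) :
    ecc (UnlGraph n (n-1)) (.inr j) = max ((n-1)/2) (min j.val ((n-1) - j.val) + 1) := by
  have hj := j.isLt
  have hi : Nonempty (Fin (n - (n-1)) ⊕ Fin (n-1)) := ⟨.inr j⟩
  apply le_antisymm
  · rw [ecc_eq_sup']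
    apply Finset.sup_le
    intro u _
    rw [unl_dist hn]
    rcases u with ui | uj
    · simp only [DU, cdi]; omega
    · have := uj.isLt
      simp only [DU, cdi]; omega
  · rw [Nat.max_le]
    constructor
    · by_cases hc : j.val + (n-1)/2 < n - 1
      · have h := dist_le_ecc' (UnlGraph n (n-1)) (.inr j) (.inr ⟨j.val + (n-1)/2, hc⟩)
        rw [unl_dist hn] at h
        simp only [DU, cdi] at h
        omega
      · have h := dist_le_ecc' (UnlGraph n (n-1)) (.inr j)
          (.inr ⟨j.val + (n-1)/2 - (n-1), by omega⟩)
        rw [unl_dist hn] at h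
        simp only [DU, cdi] at h
        omega
    · have h := dist_le_ecc' (UnlGraph n (n-1)) (.inr j) (.inl ⟨0, by omega⟩)
      rw [unl_dist hn] at h
      simp only [DU, cdi] at h
      omega

end Unl4

section Unl5

variable {n : ℕ} (hn : 5 ≤ n)
include hn

lemma unl_total_sum :
    totalEcc (UnlGraph n (n-1)) = ((n-1)/2 + 1) + ((n-1) * ((n-1)/2)
      + (Finset.univ.filter (fun j : Fin (n-1) =>
          min j.val ((n-1) - j.val) = (n-1)/2)).card) := by
  rw [totalEcc, Fintype.sum_sum_type]
  congr 1
  · rw [Finset.sum_congr rfl (fun i _ => unl_ecc_inl hn i), Finset.sum_const,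
      Finset.card_univ, Fintype.card_fin, smul_eq_mul]
    have h1 : n - (n-1) = 1 := by omega
    rw [h1, one_mul]
  · rw [Finset.sum_congr rfl (fun j _ => unl_ecc_inr hn j)]
    have hpt : ∀ j : Fin (n-1), max ((n-1)/2) (min j.val ((n-1) - j.val) + 1)
        = (n-1)/2 + (if min j.val ((n-1) - j.val) = (n-1)/2 then 1 else 0) := by
      intro j
      have := j.isLt
      by_cases hc : min j.val ((n-1) - j.val) = (n-1)/2
      · rw [if_pos hc]; omega
      · rw [if_neg hc]; omega
    rw [Finset.sum_congr rfl (fun j _ => hpt j), Finset.sum_add_distrib, Finset.sum_const,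
      Finset.card_univ, Fintype.card_fin, smul_eq_mul, Finset.card_filter]

lemma unl_count_odd (hpar : n % 2 = 0) :
    (Finset.univ.filter (fun j : Fin (n-1) =>
        min j.val ((n-1) - j.val) = (n-1)/2)).card = 2 := by
  have h1 : (Finset.univ.filter (fun j : Fin (n-1) =>
      min j.val ((n-1) - j.val) = (n-1)/2))
      = {(⟨(n-1)/2, by omega⟩ : Fin (n-1)), (⟨(n-1)/2 + 1, by omega⟩ : Fin (n-1))} := by
    ext j
    have := j.isLt
    simp only [Finset.mem_filter, Finset.mem_univ, true_and, Finset.mem_insert,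
      Finset.mem_singleton, Fin.ext_iff]
    constructor
    · intro h; omega
    · intro h; rcases h with h | h <;> omega
  rw [h1]
  rw [Finset.card_insert_of_notMem (by
    simp only [Finset.mem_singleton, Fin.ext_iff]
    omega), Finset.card_singleton]

lemma unl_count_even (hpar : n % 2 = 1) :
    (Finset.univ.filter (fun j : Fin (n-1) =>
        min j.val ((n-1) - j.val) = (n-1)/2)).card = 1 := by
  have h1 : (Finset.univ.filter (fun j : Fin (n-1) =>
      min j.val ((n-1) - j.val) = (n-1)/2))
      = {(⟨(n-1)/2, by omega⟩ : Fin (n-1))} := by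
    ext j
    have := j.isLt
    simp only [Finset.mem_filter, Finset.mem_univ, true_and, Finset.mem_singleton, Fin.ext_iff]
    omega
  rw [h1, Finset.card_singleton]

lemma unl_total : totalEcc (UnlGraph n (n-1)) = (n+1)/2 * (n-2) + 3 := by
  rw [unl_total_sum hn]
  rcases Nat.even_or_odd n with he | ho
  · obtain ⟨k, hk⟩ := he
    have hk3 : 3 ≤ k := by omega
    rw [unl_count_odd hn (by omega)]
    have e1 : (n-1)/2 = k - 1 := by omega
    have e2 : (n+1)/2 = k := by omega
    have e3 : n - 1 = 2*k - 1 := by omega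
    have e4 : n - 2 = 2*k - 2 := by omega
    rw [e1, e2, e3, e4]
    zify [show 1 ≤ k from by omega, show 1 ≤ 2*k from by omega, show 2 ≤ 2*k from by omega]
    ring
  · obtain ⟨k, hk⟩ := ho
    have hk3 : 2 ≤ k := by omega
    rw [unl_count_even hn (by omega)]
    have e1 : (n-1)/2 = k := by omega
    have e2 : (n+1)/2 = k + 1 := by omega
    have e3 : n - 1 = 2*k := by omega
    have e4 : n - 2 = 2*k - 1 := by omega
    rw [e1, e2, e3, e4]
    zify [show 1 ≤ 2*k from by omega]
    ring

end Unl5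


end AuxP1


-- STATEMENT 18
theorem stmt18 {V : Type*} [Fintype V] (G : SimpleGraph V) (hG : G.Connected)
    (n : ℕ) (hn : 5 ≤ n) (hcard : Fintype.card V = n)
    (hcut : {w | IsCutVertex G w}.ncard = 1) :
    totalEcc G ≤ totalEcc (UnlGraph n (n - 1)) ∧
    (Even n → totalEcc (UnlGraph n (n - 1)) = n * (n - 2) / 2 + 3) ∧
    (Odd n → totalEcc (UnlGraph n (n - 1)) = n * (n - 1) / 2 + 2) := by
  haveI hne : Nonempty V := by
    rw [← Fintype.card_pos_iff]
    omega
  obtain ⟨w, hw⟩ := Set.ncard_eq_one.1 hcut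
  have hcutw : IsCutVertex G w := by
    have : w ∈ {w' | IsCutVertex G w'} := by rw [hw]; exact Set.mem_singleton w
    exact this
  have huniq : ∀ y, IsCutVertex G y → y = w := fun y hy => by
    have : y ∈ {w' | IsCutVertex G w'} := hy
    rw [hw] at this
    exact this
  refine ⟨?_, ?_, ?_⟩
  · calc totalEcc G ≤ (n+1)/2 * (n-2) + 3 := partII_bound hG huniq hcutw hn hcard
      _ = totalEcc (UnlGraph n (n-1)) := (unl_total hn).symm
  · intro hev
    rw [unl_total hn]
    obtain ⟨k, hk⟩ := hev
    have e0 : n = 2*k := by omega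
    have e1 : (n+1)/2 = k := by omega
    have e2 : n - 2 = 2*k - 2 := by omega
    rw [e1, e2, e0]
    rw [mul_assoc 2 k (2*k-2), Nat.mul_div_cancel_left _ (by norm_num : 0 < 2)]
  · intro hod
    rw [unl_total hn]
    obtain ⟨k, hk⟩ := hod
    have e0 : n = 2*k+1 := by omega
    have e1 : (n+1)/2 = k+1 := by omega
    have e2 : n - 2 = 2*k - 1 := by omega
    have e3 : n - 1 = 2*k := by omega
    rw [e1, e2, e3, e0]
    have h2 : (2*k+1) * (2*k) = 2 * ((2*k+1)*k) := by ring
    rw [h2, Nat.mul_div_cancel_left _ (by norm_num : 0 < 2)]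
    zify [show 1 ≤ 2*k from by omega]
    ring
end
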